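/- arXiv:1409.2588 — 2 statements merged into one kernel-verified Lean document; each statement's English description precedes it below -/
import Mathlib

section
/- For every d ≥ 2 there exists a compact set A ⊂ ℝ^d with dim_H(A) = d such that A does not contain the vertices of any parallelogram; that is, there do not exist four pairwise distinct points a, b, c, e ∈ A with a + c = b + e. -/
open Finset in
lemma Maga.filter_range_eq_Ico (m n : ℕ) :
    (Finset.range n).filter (fun k => m < k) = Finset.Ico (m+1) n := by
  ext k; simp only [Finset.mem_Ico, Finset.mem_range, Finset.mem_filter]; omega

namespace Maga

section Series

variable (M : ℕ → ℕ)

/-- cumulative products of the bases -/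
def W (k : ℕ) : ℕ := ∏ ℓ ∈ Finset.range k, M ℓ

variable (hM : ∀ k, 4 ≤ M k)

lemma div_le_div_same' {x y c : ℝ} (h : x ≤ y) (hc : 0 < c) : x / c ≤ y / c := by
  have := mul_le_mul_of_nonneg_right h (inv_nonneg.mpr hc.le)
  simpa [div_eq_mul_inv] using this

lemma W_zero : W M 0 = 1 := rfl

lemma W_succ (k : ℕ) : W M (k+1) = W M k * M k := Finset.prod_range_succ _ _

include hM

lemma W_pos (k : ℕ) : 0 < W M k := by
  induction k with
  | zero => simp [W_zero]
  | succ k ih => rw [W_succ]; exact Nat.mul_pos ih (by have := hM k; omega)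

lemma W_cast_pos (k : ℕ) : (0:ℝ) < (W M k : ℝ) := by
  exact_mod_cast W_pos M hM k

lemma W_le_W {m n : ℕ} (h : m ≤ n) : W M m ≤ W M n := by
  induction n with
  | zero => simp [Nat.le_zero.mp h]
  | succ n ih =>
      rcases Nat.lt_or_ge m (n+1) with h' | h'
      · have h1 := ih (by omega)
        rw [W_succ]
        calc W M m ≤ W M n := h1
        _ ≤ W M n * M n := Nat.le_mul_of_pos_right _ (by have := hM n; omega)
      · have : m = n+1 := by omega
        simp [this]

lemma four_pow_le_W (k : ℕ) : 4^k ≤ W M k := by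
  induction k with
  | zero => simp [W_zero]
  | succ k ih =>
      rw [W_succ, pow_succ]
      exact Nat.mul_le_mul ih (hM k)

lemma one_div_W_le (m n : ℕ) (h : m ≤ n) : 1/(W M n : ℝ) ≤ 1/(W M m : ℝ) := by
  apply one_div_le_one_div_of_le (W_cast_pos M hM m)
  exact_mod_cast W_le_W M hM h

lemma telescope_eq {m n : ℕ} (h : m ≤ n) :
    ∑ k ∈ Finset.Ico m n, ((M k : ℝ) - 1)/(W M (k+1)) = 1/(W M m) - 1/(W M n) := by
  induction n, h using Nat.le_induction with
  | base => simp
  | succ n hmn ih =>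
      rw [Finset.sum_Ico_succ_top hmn, ih]
      have h1 : (0:ℝ) < W M n := W_cast_pos M hM n
      have h2 : (0:ℝ) < M n := by have := hM n; positivity
      have h3 : (W M (n+1) : ℝ) = (W M n : ℝ) * M n := by rw [W_succ]; push_cast; ring
      rw [h3]; field_simp; ring

lemma cast_le_sub_one {a k : ℕ} (hak : a ≤ M k - 1) : (a : ℝ) ≤ (M k : ℝ) - 1 := by
  have h4 := hM k
  have : (a : ℝ) ≤ ((M k - 1 : ℕ) : ℝ) := by exact_mod_cast hak
  calc (a : ℝ) ≤ ((M k - 1 : ℕ) : ℝ) := this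
    _ = (M k : ℝ) - 1 := by
        rw [Nat.cast_sub (by omega : 1 ≤ M k)]; norm_num

lemma sum_Ico_le (a : ℕ → ℕ) (ha : ∀ k, a k ≤ M k - 1) {m n : ℕ} (h : m ≤ n) :
    ∑ k ∈ Finset.Ico m n, (a k : ℝ)/(W M (k+1)) ≤ 1/(W M m) - 1/(W M n) := by
  rw [← telescope_eq M hM h]
  apply Finset.sum_le_sum
  intro k _
  exact div_le_div_same' (cast_le_sub_one M hM (ha k)) (W_cast_pos M hM (k+1))

lemma summable_digits (a : ℕ → ℕ) (ha : ∀ k, a k ≤ M k - 1) :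
    Summable (fun k => (a k : ℝ)/(W M (k+1))) := by
  apply summable_of_sum_range_le (c := 1)
  · intro k; positivity
  · intro n
    calc ∑ k ∈ Finset.range n, (a k : ℝ)/(W M (k+1))
        = ∑ k ∈ Finset.Ico 0 n, (a k : ℝ)/(W M (k+1)) := by
          rw [Finset.range_eq_Ico]
      _ ≤ 1/(W M 0) - 1/(W M n) := sum_Ico_le M hM a ha (Nat.zero_le n)
      _ ≤ 1 := by
          rw [W_zero]
          have h0 : 0 ≤ 1/(W M n : ℝ) := by positivity
          simp only [Nat.cast_one]
          linarith

/-- the value of a digit sequence -/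
noncomputable def S (a : ℕ → ℕ) : ℝ := ∑' k, (a k : ℝ)/(W M (k+1))

omit hM in
lemma S_nonneg (a : ℕ → ℕ) : 0 ≤ S M a :=
  tsum_nonneg (fun k => by positivity)

lemma S_le_one (a : ℕ → ℕ) (ha : ∀ k, a k ≤ M k - 1) : S M a ≤ 1 := by
  apply Summable.tsum_le_of_sum_le (summable_digits M hM a ha)
  intro s
  classical
  rcases s.eq_empty_or_nonempty with rfl | hs
  · simp
  · obtain ⟨n, hn⟩ := s.exists_le
    calc ∑ k ∈ s, (a k : ℝ)/(W M (k+1))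
        ≤ ∑ k ∈ Finset.Ico 0 (n+1), (a k : ℝ)/(W M (k+1)) := by
          apply Finset.sum_le_sum_of_subset_of_nonneg
          · intro k hk
            simp only [Finset.mem_Ico]
            exact ⟨Nat.zero_le _, Nat.lt_succ_of_le (hn k hk)⟩
          · intro k _ _; positivity
      _ ≤ 1/(W M 0) - 1/(W M (n+1)) := sum_Ico_le M hM a ha (Nat.zero_le _)
      _ ≤ 1 := by
          rw [W_zero]
          have h0 : 0 ≤ 1/(W M (n+1) : ℝ) := by positivity
          simp only [Nat.cast_one]
          linarith

omit hM in
lemma tsum_tail_le (a : ℕ → ℕ) (m : ℕ) (c : ℝ)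
    (hc : ∀ n, ∑ k ∈ Finset.Ico (m+1) n, (a k : ℝ)/(W M (k+1)) ≤ c) :
    ∑' k, (if m < k then (a k : ℝ)/(W M (k+1)) else 0) ≤ c := by
  apply Real.tsum_le_of_sum_range_le
  · intro k; split <;> positivity
  · intro n
    rw [Finset.sum_ite, Finset.sum_const_zero, add_zero, filter_range_eq_Ico]
    exact hc n

lemma tail_partial_A (a : ℕ → ℕ) (ha : ∀ k, a k ≤ M k - 2) (m n : ℕ) :
    ∑ k ∈ Finset.Ico (m+1) n, (a k : ℝ)/(W M (k+1)) ≤ 1/(W M (m+1)) - 1/(W M (m+2)) := by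
  have hW2 := W_cast_pos M hM (m+2)
  have hW1 := W_cast_pos M hM (m+1)
  rcases Nat.lt_or_ge n (m+2) with h | h
  · have he : Finset.Ico (m+1) n = ∅ := by
      apply Finset.Ico_eq_empty; omega
    rw [he, Finset.sum_empty]
    have := one_div_W_le M hM (m+1) (m+2) (by omega)
    linarith
  · rw [Finset.sum_eq_sum_Ico_succ_bot (by omega : m+1 < n)]
    have h1 : ∑ k ∈ Finset.Ico (m+2) n, (a k : ℝ)/(W M (k+1)) ≤ 1/(W M (m+2)) - 1/(W M n) :=
      sum_Ico_le M hM a (fun k => by have := ha k; have := hM k; omega) (by omega)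
    have h2 : (a (m+1) : ℝ) ≤ (M (m+1) : ℝ) - 2 := by
      have hle := ha (m+1); have h4 := hM (m+1)
      have hcast : (a (m+1) : ℝ) ≤ ((M (m+1) - 2 : ℕ) : ℝ) := by exact_mod_cast hle
      calc (a (m+1) : ℝ) ≤ ((M (m+1) - 2 : ℕ) : ℝ) := hcast
        _ = (M (m+1) : ℝ) - 2 := by
            rw [Nat.cast_sub (by omega : 2 ≤ M (m+1))]; norm_num
    have h5 : (a (m+1) : ℝ)/(W M (m+2)) ≤ ((M (m+1) : ℝ) - 2)/(W M (m+2)) :=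
      div_le_div_same' h2 hW2
    have h3 : (W M (m+2) : ℝ) = (W M (m+1) : ℝ) * M (m+1) := by
      rw [W_succ]; push_cast; ring
    have h6 : ((M (m+1) : ℝ) - 2)/(W M (m+2)) + 1/(W M (m+2)) = 1/(W M (m+1)) - 1/(W M (m+2)) := by
      rw [h3]
      have hMp : (0:ℝ) < M (m+1) := by have := hM (m+1); positivity
      field_simp
      ring
    have h7 : 0 ≤ 1/(W M n : ℝ) := by positivity
    linarith

lemma tail_partial_B (a : ℕ → ℕ) (ha : ∀ k, 4 * a k + 1 ≤ M k) (m n : ℕ) :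
    ∑ k ∈ Finset.Ico (m+1) n, (a k : ℝ)/(W M (k+1)) ≤ (1/4) * (1/(W M (m+1))) := by
  have hW1 := W_cast_pos M hM (m+1)
  rcases Nat.lt_or_ge n (m+1) with h | h
  · have he : Finset.Ico (m+1) n = ∅ := by apply Finset.Ico_eq_empty; omega
    rw [he, Finset.sum_empty]; positivity
  · have key : ∀ k, (a k : ℝ) ≤ ((M k : ℝ) - 1)/4 := by
      intro k
      have hk := ha k
      have : (4 * a k + 1 : ℝ) ≤ M k := by exact_mod_cast hk
      push_cast at this
      linarith
    calc ∑ k ∈ Finset.Ico (m+1) n, (a k : ℝ)/(W M (k+1))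
        ≤ ∑ k ∈ Finset.Ico (m+1) n, (((M k : ℝ) - 1)/4)/(W M (k+1)) := by
          apply Finset.sum_le_sum
          intro k _
          exact div_le_div_same' (key k) (W_cast_pos M hM (k+1))
      _ = (1/4) * ∑ k ∈ Finset.Ico (m+1) n, ((M k : ℝ) - 1)/(W M (k+1)) := by
          rw [Finset.mul_sum]; congr 1; funext k; ring
      _ ≤ (1/4) * (1/(W M (m+1)) - 1/(W M n)) := by
          have := telescope_eq M hM h
          linarith [telescope_eq M hM h]
      _ ≤ (1/4) * (1/(W M (m+1))) := by
          have : 0 ≤ 1/(W M n : ℝ) := by positivity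
          linarith

lemma S_sub_decomp (a b : ℕ → ℕ) (ha : ∀ k, a k ≤ M k - 1) (hb : ∀ k, b k ≤ M k - 1)
    (m : ℕ) (hagree : ∀ k < m, a k = b k) :
    S M a - S M b = ((a m : ℝ) - b m)/(W M (m+1)) +
      ∑' k, (if m < k then ((a k : ℝ) - (b k : ℝ))/(W M (k+1)) else 0) := by
  have hsa := summable_digits M hM a ha
  have hsb := summable_digits M hM b hb
  have hsub : S M a - S M b = ∑' k, ((a k : ℝ)/(W M (k+1)) - (b k : ℝ)/(W M (k+1))) := by
    rw [S, S, ← Summable.tsum_sub hsa hsb]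
  rw [hsub]
  have hs : Summable (fun k => (a k : ℝ)/(W M (k+1)) - (b k : ℝ)/(W M (k+1))) := hsa.sub hsb
  rw [Summable.tsum_eq_add_tsum_ite hs m]
  congr 1
  · rw [sub_div]
  · apply tsum_congr
    intro k
    rcases lt_trichotomy k m with h | h | h
    · simp [h.ne, not_lt.mpr h.le, hagree k h]
    · simp [h]
    · simp [h.ne', h, sub_div]

lemma remainder_le (a b : ℕ → ℕ)
    (ha : ∀ k, a k ≤ M k - 1) (hb : ∀ k, b k ≤ M k - 1) (m : ℕ) (c : ℝ)
    (hc : ∀ n, ∑ k ∈ Finset.Ico (m+1) n,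
        ((max (a k) (b k) : ℕ) : ℝ)/(W M (k+1)) ≤ c) :
    |∑' k, (if m < k then ((a k : ℝ) - (b k : ℝ))/(W M (k+1)) else 0)| ≤ c := by
  set f : ℕ → ℝ := fun k => (if m < k then ((a k : ℝ) - (b k : ℝ))/(W M (k+1)) else 0) with hf
  set g : ℕ → ℝ := fun k =>
    (if m < k then ((max (a k) (b k) : ℕ) : ℝ)/(W M (k+1)) else 0) with hg
  have habs : ∀ k, |f k| ≤ g k := by
    intro k
    simp only [hf, hg]
    split
    · rw [abs_div, abs_of_pos (W_cast_pos M hM (k+1))]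
      apply div_le_div_same' _ (W_cast_pos M hM (k+1))
      rw [abs_sub_le_iff]
      constructor
      · have h1 : (a k : ℝ) ≤ ((max (a k) (b k) : ℕ) : ℝ) := by
          exact_mod_cast le_max_left _ _
        have hb0 : (0:ℝ) ≤ (b k : ℝ) := by positivity
        linarith
      · have h1 : (b k : ℝ) ≤ ((max (a k) (b k) : ℕ) : ℝ) := by
          exact_mod_cast le_max_right _ _
        have ha0 : (0:ℝ) ≤ (a k : ℝ) := by positivity
        linarith
    · simp
  have hgsum : Summable g := by
    apply Summable.of_nonneg_of_le
      (f := fun k => ((max (a k) (b k) : ℕ) : ℝ)/(W M (k+1)))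
      (fun k => by simp only [hg]; split <;> positivity)
    · intro k
      simp only [hg]
      split
      · exact le_refl _
      · positivity
    · exact summable_digits M hM _ (fun k => by
        have := ha k; have := hb k; omega)
  have hfsum : Summable f := by
    apply Summable.of_norm
    apply Summable.of_nonneg_of_le (fun k => norm_nonneg _) _ hgsum
    intro k
    rw [Real.norm_eq_abs]
    exact habs k
  calc |∑' k, f k| ≤ ∑' k, |f k| := by
        have := norm_tsum_le_tsum_norm (f := f) ?_
        · simpa [Real.norm_eq_abs] using this
        · apply Summable.of_nonneg_of_le (fun k => norm_nonneg _) _ hgsum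
          intro k
          rw [Real.norm_eq_abs]
          exact habs k
    _ ≤ ∑' k, g k := by
        apply Summable.tsum_le_tsum habs _ hgsum
        apply Summable.of_nonneg_of_le (fun k => abs_nonneg _) habs hgsum
    _ ≤ c := tsum_tail_le M _ m c hc

end Series
end Maga
namespace Maga
section Series2
variable (M : ℕ → ℕ) (hM : ∀ k, 4 ≤ M k)
include hM

lemma S_sub_lower (a b : ℕ → ℕ) (ha : ∀ k, 4 * a k + 1 ≤ M k) (hb : ∀ k, 4 * b k + 1 ≤ M k)
    (m : ℕ) (hagree : ∀ k < m, a k = b k) (hlt : b m < a m) :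
    (3/4) * (((a m : ℝ) - b m)/(W M (m+1))) ≤ S M a - S M b := by
  have ha1 : ∀ k, a k ≤ M k - 1 := fun k => by have := ha k; omega
  have hb1 : ∀ k, b k ≤ M k - 1 := fun k => by have := hb k; omega
  have hdec := S_sub_decomp M hM a b ha1 hb1 m hagree
  have hrem := remainder_le M hM a b ha1 hb1 m ((1/4) * (1/(W M (m+1))))
    (fun n => tail_partial_B M hM _ (fun k => by have := ha k; have := hb k; omega) m n)
  have hW := W_cast_pos M hM (m+1)
  have hD : 1/(W M (m+1) : ℝ) ≤ ((a m : ℝ) - b m)/(W M (m+1)) := by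
    apply div_le_div_same' _ hW
    have : (b m : ℝ) + 1 ≤ a m := by exact_mod_cast hlt
    linarith
  have habs := abs_le.mp hrem
  linarith [habs.1, habs.2]

lemma S_sub_upper (a b : ℕ → ℕ) (ha : ∀ k, a k ≤ M k - 1) (hb : ∀ k, b k ≤ M k - 1)
    (m : ℕ) (hagree : ∀ k < m, a k = b k) :
    |S M a - S M b| ≤ (((max (a m) (b m) : ℕ) : ℝ) + 1)/(W M (m+1)) := by
  have hdec := S_sub_decomp M hM a b ha hb m hagree
  have hW := W_cast_pos M hM (m+1)
  have hrem := remainder_le M hM a b ha hb m (1/(W M (m+1)))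
    (by
      intro n
      rcases Nat.lt_or_ge n (m+1) with h | h
      · have he : Finset.Ico (m+1) n = ∅ := by apply Finset.Ico_eq_empty; omega
        rw [he, Finset.sum_empty]; positivity
      · have h1 := sum_Ico_le M hM (fun k => max (a k) (b k))
          (fun k => by
            show max (a k) (b k) ≤ M k - 1
            exact max_le (ha k) (hb k)) h
        have : 0 ≤ 1/(W M n : ℝ) := by positivity
        linarith)
  have hD : |((a m : ℝ) - b m)/(W M (m+1))| ≤ ((max (a m) (b m) : ℕ) : ℝ)/(W M (m+1)) := by
    rw [abs_div, abs_of_pos hW]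
    apply div_le_div_same' _ hW
    rw [abs_sub_le_iff]
    constructor
    · have h1 : (a m : ℝ) ≤ ((max (a m) (b m) : ℕ) : ℝ) := by exact_mod_cast le_max_left _ _
      have : (0:ℝ) ≤ (b m : ℝ) := by positivity
      linarith
    · have h1 : (b m : ℝ) ≤ ((max (a m) (b m) : ℕ) : ℝ) := by exact_mod_cast le_max_right _ _
      have : (0:ℝ) ≤ (a m : ℝ) := by positivity
      linarith
  have habs := abs_le.mp hrem
  rw [hdec, add_div]
  have h2 := abs_add_le (((a m : ℝ) - b m)/(W M (m+1)))
    (∑' k, (if m < k then ((a k : ℝ) - (b k : ℝ))/(W M (k+1)) else 0))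
  calc |((a m : ℝ) - b m)/(W M (m+1)) + _| ≤ _ := h2
    _ ≤ ((max (a m) (b m) : ℕ) : ℝ)/(W M (m+1)) + 1/(W M (m+1)) := by
        apply add_le_add hD hrem
    _ = _ := by ring

lemma S_lt_of_lt (a b : ℕ → ℕ) (ha : ∀ k, a k ≤ M k - 2) (hb : ∀ k, b k ≤ M k - 2)
    (m : ℕ) (hagree : ∀ k < m, a k = b k) (hlt : b m < a m) :
    S M b < S M a := by
  have ha1 : ∀ k, a k ≤ M k - 1 := fun k => by have := ha k; have := hM k; omega
  have hb1 : ∀ k, b k ≤ M k - 1 := fun k => by have := hb k; have := hM k; omega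
  have hdec := S_sub_decomp M hM a b ha1 hb1 m hagree
  have hrem := remainder_le M hM a b ha1 hb1 m (1/(W M (m+1)) - 1/(W M (m+2)))
    (fun n => tail_partial_A M hM _ (fun k => by have := ha k; have := hb k; omega) m n)
  have hW1 := W_cast_pos M hM (m+1)
  have hW2 := W_cast_pos M hM (m+2)
  have hD : 1/(W M (m+1) : ℝ) ≤ ((a m : ℝ) - b m)/(W M (m+1)) := by
    apply div_le_div_same' _ hW1
    have : (b m : ℝ) + 1 ≤ a m := by exact_mod_cast hlt
    linarith
  have habs := abs_le.mp hrem
  have : 0 < S M a - S M b := by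
    have h0 : 0 < 1/(W M (m+2) : ℝ) := by positivity
    linarith [habs.1]
  linarith

lemma S_inj (a b : ℕ → ℕ) (ha : ∀ k, a k ≤ M k - 2) (hb : ∀ k, b k ≤ M k - 2)
    (h : S M a = S M b) : a = b := by
  have key : ∀ m, (∀ k < m, a k = b k) → a m = b m := by
    intro m hagree
    by_contra hne
    rcases Nat.lt_or_ge (b m) (a m) with hlt | hge
    · exact absurd h (ne_of_gt (S_lt_of_lt M hM a b ha hb m hagree hlt))
    · have hlt : a m < b m := by omega
      exact absurd h.symm
        (ne_of_gt (S_lt_of_lt M hM b a hb ha m (fun k hk => (hagree k hk).symm) hlt))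
  funext m
  induction m using Nat.strong_induction_on with
  | _ m ih => exact key m ih

end Series2
end Maga
namespace Maga

lemma pow2_sidon_sorted {a b c e : ℕ} (hab : a ≤ b) (hce : c ≤ e)
    (h : 2^a + 2^b = 2^c + 2^e) : a = c ∧ b = e := by
  have key : ∀ a b c e : ℕ, a ≤ b → c ≤ e → a ≤ c → 2^a + 2^b = 2^c + 2^e → a = c := by
    intro a b c e hab hce hac heq
    by_contra hne
    have hac' : a < c := lt_of_le_of_ne hac hne
    have hfac : 2^a * (1 + 2^(b-a)) = 2^a * (2^(c-a) + 2^(e-a)) := by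
      rw [Nat.mul_add, Nat.mul_add, ← pow_add, ← pow_add, ← pow_add]
      rw [Nat.add_sub_cancel' hab, Nat.add_sub_cancel' (le_trans hac hce),
        Nat.add_sub_cancel' hac]
      simpa using heq
    have h1 : 1 + 2^(b-a) = 2^(c-a) + 2^(e-a) :=
      Nat.eq_of_mul_eq_mul_left (pow_pos (by norm_num : 0 < 2) a) hfac
    obtain ⟨x, hx⟩ : 2 ∣ 2^(c-a) := dvd_pow_self 2 (by omega)
    obtain ⟨z, hz⟩ : 2 ∣ 2^(e-a) := dvd_pow_self 2 (by omega)
    rcases Nat.eq_or_lt_of_le hab with hba | hba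
    · -- b = a : LHS = 2, RHS ≥ 4
      have hc2 : 2 ≤ 2^(c-a) := by
        calc 2 = 2^1 := by norm_num
        _ ≤ 2^(c-a) := Nat.pow_le_pow_right (by norm_num) (by omega)
      have he2 : 2 ≤ 2^(e-a) := by
        calc 2 = 2^1 := by norm_num
        _ ≤ 2^(e-a) := Nat.pow_le_pow_right (by norm_num) (by omega)
      have hba0 : b - a = 0 := by omega
      rw [hba0] at h1
      norm_num at h1
      omega
    · obtain ⟨w, hw⟩ : 2 ∣ 2^(b-a) := dvd_pow_self 2 (by omega)
      omega
  constructor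
  · rcases le_total a c with hac | hca
    · exact key a b c e hab hce hac h
    · exact (key c e a b hce hab hca h.symm).symm
  · -- b = e
    have hbe : ∀ a b c e : ℕ, a ≤ b → c ≤ e → 2^a + 2^b = 2^c + 2^e → a = c → b = e := by
      intro a b c e _ _ heq hac
      subst hac
      have : (2:ℕ)^b = 2^e := by omega
      exact Nat.pow_right_injective (by norm_num) this
    rcases le_total a c with hac | hca
    · exact hbe a b c e hab hce h (key a b c e hab hce hac h)
    · exact (hbe c e a b hce hab h.symm (key c e a b hce hab hca h.symm)).symm

lemma pow2_sidon {a b c e : ℕ} (h : 2^a + 2^b = 2^c + 2^e) :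
    (a = c ∧ b = e) ∨ (a = e ∧ b = c) := by
  rcases le_total a b with hab | hba
  · rcases le_total c e with hce | hec
    · exact Or.inl (pow2_sidon_sorted hab hce h)
    · have := pow2_sidon_sorted hab hec (by omega)
      exact Or.inr this
  · rcases le_total c e with hce | hec
    · have := pow2_sidon_sorted hba hce (by omega)
      exact Or.inr ⟨this.2, this.1⟩
    · have := pow2_sidon_sorted hba hec (by omega)
      exact Or.inl ⟨this.2, this.1⟩

lemma sum_base_lt {n K : ℕ} (hK : 0 < K) (c : Fin n → ℕ) (h : ∀ i, c i < K) :
    ∑ i, c i * K^(i : ℕ) < K^n := by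
  induction n with
  | zero => simp
  | succ n ih =>
      rw [Fin.sum_univ_succ]
      have hS : ∑ i : Fin n, c i.succ * K^((i.succ : ℕ)) =
          (∑ i : Fin n, c i.succ * K^(i : ℕ)) * K := by
        rw [Finset.sum_mul]
        congr 1; funext i
        rw [Fin.val_succ, pow_succ]; ring
      rw [hS]
      have h1 : ∑ i : Fin n, c i.succ * K^(i : ℕ) < K^n := ih (fun i => c i.succ) (fun i => h i.succ)
      have h2 : c 0 < K := h 0
      have h3 : (∑ i : Fin n, c i.succ * K^(i : ℕ)) * K ≤ (K^n - 1) * K :=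
        Nat.mul_le_mul_right K (by omega)
      have h4 : (K^n - 1) * K = K^(n+1) - K := by
        have : 1 ≤ K^n := Nat.one_le_pow _ _ hK
        rw [pow_succ, Nat.sub_mul, one_mul]
      have h5 : K ≤ K^(n+1) := by
        calc K = K^1 := (pow_one K).symm
        _ ≤ K^(n+1) := Nat.pow_le_pow_right hK (by omega)
      simp only [Fin.val_zero, pow_zero, mul_one]
      omega

lemma repr_inj {K : ℕ} (hK : 0 < K) : ∀ {n : ℕ} (c c' : Fin n → ℕ),
    (∀ i, c i < K) → (∀ i, c' i < K) →
    ∑ i, c i * K^(i : ℕ) = ∑ i, c' i * K^(i : ℕ) → c = c' := by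
  intro n
  induction n with
  | zero => intro c c' _ _ _; exact Subsingleton.elim c c'
  | succ n ih =>
      intro c c' hc hc' heq
      have expand : ∀ b : Fin (n+1) → ℕ,
          ∑ i, b i * K^(i : ℕ) = b 0 + (∑ i : Fin n, b i.succ * K^(i : ℕ)) * K := by
        intro b
        rw [Fin.sum_univ_succ]
        congr 1
        · simp
        · rw [Finset.sum_mul]
          congr 1; funext i
          rw [Fin.val_succ, pow_succ]; ring
      rw [expand c, expand c'] at heq
      have h0 : c 0 = c' 0 := by
        have m1 : (c 0 + (∑ i : Fin n, c i.succ * K^(i : ℕ)) * K) % K = c 0 := by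
          rw [Nat.add_mul_mod_self_right, Nat.mod_eq_of_lt (hc 0)]
        have m2 : (c' 0 + (∑ i : Fin n, c' i.succ * K^(i : ℕ)) * K) % K = c' 0 := by
          rw [Nat.add_mul_mod_self_right, Nat.mod_eq_of_lt (hc' 0)]
        rw [← m1, ← m2, heq]
      have hS : ∑ i : Fin n, c i.succ * K^(i : ℕ) = ∑ i : Fin n, c' i.succ * K^(i : ℕ) := by
        have : (∑ i : Fin n, c i.succ * K^(i : ℕ)) * K = (∑ i : Fin n, c' i.succ * K^(i : ℕ)) * K := by
          omega
        exact Nat.eq_of_mul_eq_mul_right hK this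
      have htail := ih (fun i => c i.succ) (fun i => c' i.succ)
        (fun i => hc i.succ) (fun i => hc' i.succ) hS
      funext i
      rcases Fin.eq_zero_or_eq_succ i with rfl | ⟨j, rfl⟩
      · exact h0
      · exact congrFun htail j

section Exists
variable (M : ℕ → ℕ) (hM : ∀ k, 4 ≤ M k)
include hM

lemma one_div_W_tendsto : Filter.Tendsto (fun n => 1/(W M n : ℝ)) Filter.atTop (nhds 0) := by
  have h1 : ∀ n, 1/(W M n : ℝ) ≤ (1/4)^n := by
    intro n
    have h2 : (4:ℝ)^n ≤ (W M n : ℝ) := by exact_mod_cast four_pow_le_W M hM n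
    have h3 : (0:ℝ) < 4^n := by positivity
    rw [div_pow, one_pow]
    exact one_div_le_one_div_of_le h3 h2
  have h0 : ∀ n, 0 ≤ 1/(W M n : ℝ) := fun n => by positivity
  have hgeo : Filter.Tendsto (fun n : ℕ => ((1:ℝ)/4)^n) Filter.atTop (nhds 0) := by
    apply tendsto_pow_atTop_nhds_zero_of_lt_one <;> norm_num
  exact squeeze_zero h0 h1 hgeo

lemma exists_digits (y : ℝ) (hy : y ∈ Set.Icc (0:ℝ) 1) :
    ∃ a : ℕ → ℕ, (∀ k, a k ≤ M k - 1) ∧ S M a = y := by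
  obtain ⟨hy0, hy1⟩ := hy
  rcases eq_or_lt_of_le hy1 with rfl | hy1
  · refine ⟨fun k => M k - 1, fun k => le_refl _, ?_⟩
    have hps : ∀ n, ∑ k ∈ Finset.range n, ((M k - 1 : ℕ) : ℝ)/(W M (k+1)) = 1 - 1/(W M n) := by
      intro n
      have : ∀ k, ((M k - 1 : ℕ) : ℝ) = (M k : ℝ) - 1 := by
        intro k
        rw [Nat.cast_sub (by have := hM k; omega : 1 ≤ M k)]; norm_num
      rw [Finset.range_eq_Ico]
      calc ∑ k ∈ Finset.Ico 0 n, ((M k - 1 : ℕ) : ℝ)/(W M (k+1))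
          = ∑ k ∈ Finset.Ico 0 n, ((M k : ℝ) - 1)/(W M (k+1)) := by
            apply Finset.sum_congr rfl; intro k _; rw [this k]
        _ = 1/(W M 0) - 1/(W M n) := telescope_eq M hM (Nat.zero_le n)
        _ = 1 - 1/(W M n) := by rw [W_zero]; norm_num
    have hH : HasSum (fun k => ((M k - 1 : ℕ) : ℝ)/(W M (k+1))) 1 := by
      rw [hasSum_iff_tendsto_nat_of_nonneg (fun k => by positivity)]
      simp only [hps]
      have := (one_div_W_tendsto M hM).const_sub 1
      simpa using this
    exact hH.tsum_eq
  · set F : ℕ → ℕ := fun k => ⌊y * (W M k : ℝ)⌋₊ with hF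
    have hWpos : ∀ k, (0:ℝ) < (W M k : ℝ) := W_cast_pos M hM
    have hf1 : ∀ k, M k * F k ≤ F (k+1) := by
      intro k
      apply Nat.le_floor
      have h1 : (F k : ℝ) ≤ y * W M k := Nat.floor_le (by positivity)
      have h2 : (W M (k+1) : ℝ) = (W M k : ℝ) * M k := by rw [W_succ]; push_cast; ring
      rw [h2]
      push_cast
      nlinarith [hWpos k, (by positivity : (0:ℝ) ≤ (M k : ℝ))]
    have hf2 : ∀ k, F (k+1) < M k * (F k + 1) := by
      intro k
      rw [hF]
      apply Nat.floor_lt (by positivity) |>.mpr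
      have h1 : y * W M k < (F k : ℝ) + 1 := Nat.lt_floor_add_one _
      have h2 : (W M (k+1) : ℝ) = (W M k : ℝ) * M k := by rw [W_succ]; push_cast; ring
      rw [h2]
      push_cast
      have hMpos : (0:ℝ) < (M k : ℝ) := by have := hM k; positivity
      nlinarith
    set a : ℕ → ℕ := fun k => F (k+1) - M k * F k with ha
    have hbound : ∀ k, a k ≤ M k - 1 := by
      intro k
      have h1 := hf1 k; have h2 := hf2 k; have h3 := hM k
      have h4 : M k * (F k + 1) = M k * F k + M k := by ring
      simp only [ha]
      omega
    have hcast : ∀ k, (a k : ℝ) = (F (k+1) : ℝ) - (M k : ℝ) * F k := by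
      intro k
      simp only [ha]
      rw [Nat.cast_sub (hf1 k)]
      push_cast; ring
    have hF0 : F 0 = 0 := by
      simp only [hF, W_zero]
      rw [Nat.floor_eq_zero]
      simpa using hy1
    have hps : ∀ n, ∑ k ∈ Finset.range n, (a k : ℝ)/(W M (k+1)) = (F n : ℝ)/(W M n) := by
      intro n
      induction n with
      | zero => simp [hF0, W_zero]
      | succ n ih =>
          rw [Finset.sum_range_succ, ih, hcast n]
          have h2 : (W M (n+1) : ℝ) = (W M n : ℝ) * M n := by rw [W_succ]; push_cast; ring
          rw [h2]
          have := hWpos n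
          have hMpos : (0:ℝ) < (M n : ℝ) := by have := hM n; positivity
          field_simp
          ring
    have hconv : Filter.Tendsto (fun n => (F n : ℝ)/(W M n)) Filter.atTop (nhds y) := by
      have hdiff : ∀ n, |(F n : ℝ)/(W M n) - y| ≤ 1/(W M n) := by
        intro n
        have h1 : (F n : ℝ) ≤ y * W M n := Nat.floor_le (by positivity)
        have h2 : y * W M n < (F n : ℝ) + 1 := Nat.lt_floor_add_one _
        rw [abs_le]
        constructor
        · rw [div_sub' (hWpos n).ne', neg_le, ← neg_div, div_le_div_iff₀ (hWpos n) (hWpos n)]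
          ring_nf
          nlinarith [hWpos n]
        · rw [div_sub' (hWpos n).ne', div_le_div_iff₀ (hWpos n) (hWpos n)]
          nlinarith [hWpos n]
      have h0 : Filter.Tendsto (fun n => (F n : ℝ)/(W M n) - y) Filter.atTop (nhds 0) := by
        apply squeeze_zero_norm hdiff (one_div_W_tendsto M hM)
      have := h0.add_const y
      simpa using this
    have hH : HasSum (fun k => (a k : ℝ)/(W M (k+1))) y := by
      rw [hasSum_iff_tendsto_nat_of_nonneg (fun k => by positivity)]
      simp only [hps]
      exact hconv
    exact ⟨a, hbound, hH.tsum_eq⟩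

end Exists
end Maga

namespace Maga
section Construction
variable (d : ℕ)

/-- the cost (number of binary digits) of the forced position handling pair `ν - 2` -/
def tOf (f : ℕ → ℕ) (ν : ℕ) : ℕ :=
  if 2 ≤ ν then 2^(d * (f (Nat.unpair (ν-2)).1 + f (Nat.unpair (ν-2)).2)) + 2 else 2

/-- body of the recursion for `beta` -/
def body (f : ℕ → ℕ) (n : ℕ) : ℕ :=
  (n+1) * (2*(n+2) + ∑ ν ∈ Finset.range (n+2), tOf d f ν)

/-- auxiliary: values of `beta` below `n` -/
def betaUpTo : ℕ → ℕ → ℕ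
  | 0 => fun _ => 0
  | n+1 => fun m => if m < n then betaUpTo n m else body d (betaUpTo n) m

/-- number of binary digits of free position `j` -/
def beta (n : ℕ) : ℕ := betaUpTo d (n+1) n

lemma tOf_congr {f g : ℕ → ℕ} {ν : ℕ} (h : ∀ m, m + 2 ≤ ν → f m = g m) :
    tOf d f ν = tOf d g ν := by
  unfold tOf
  split
  · have h1 := Nat.unpair_left_le (ν-2)
    have h2 := Nat.unpair_right_le (ν-2)
    rw [h _ (by omega), h _ (by omega)]
  · rfl

lemma betaUpTo_eq_beta : ∀ n m, m < n → betaUpTo d n m = beta d m := by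
  intro n
  induction n with
  | zero => intro m h; omega
  | succ n ih =>
      intro m h
      rcases Nat.lt_or_ge m n with h' | h'
      · have : betaUpTo d (n+1) m = betaUpTo d n m := by
          simp only [betaUpTo, if_pos h']
        rw [this, ih m h']
      · have hm : m = n := by omega
        subst hm
        rfl

lemma beta_spec (n : ℕ) : beta d n = body d (beta d) n := by
  have h1 : beta d n = body d (betaUpTo d n) n := by
    show betaUpTo d (n+1) n = _
    simp only [betaUpTo, if_neg (lt_irrefl n)]
  rw [h1]
  unfold body
  have hsum : ∑ ν ∈ Finset.range (n+2), tOf d (betaUpTo d n) ν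
      = ∑ ν ∈ Finset.range (n+2), tOf d (beta d) ν := by
    apply Finset.sum_congr rfl
    intro ν hν
    simp only [Finset.mem_range] at hν
    apply tOf_congr
    intro m hm
    exact betaUpTo_eq_beta d n m (by omega)
  rw [hsum]

/-- the cost sequence -/
def tseq (ν : ℕ) : ℕ := tOf d (beta d) ν

lemma beta_formula (n : ℕ) :
    beta d n = (n+1) * (2*(n+2) + ∑ ν ∈ Finset.range (n+2), tseq d ν) := beta_spec d n

lemma beta_ge (n : ℕ) : 4 ≤ beta d n := by
  rw [beta_formula]
  have h1 : 1 ≤ n+1 := by omega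
  have h2 : 4 ≤ 2*(n+2) + ∑ ν ∈ Finset.range (n+2), tseq d ν := by omega
  calc 4 = 1 * 4 := by norm_num
  _ ≤ (n+1) * (2*(n+2) + ∑ ν ∈ Finset.range (n+2), tseq d ν) := Nat.mul_le_mul h1 h2

lemma tseq_ge (ν : ℕ) : 2 ≤ tseq d ν := by
  unfold tseq tOf
  split
  · exact Nat.le_add_left 2 _
  · exact le_refl 2

/-- number of binary digits of the base at position `k` -/
def bits (k : ℕ) : ℕ := if k % 2 = 0 then beta d (k/2) + 2 else tseq d (k/2)

/-- the base at position `k` -/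
def Mb (k : ℕ) : ℕ := 2^(bits d k)

/-- the number of possible digits at free position `j` -/
def Bd (j : ℕ) : ℕ := 2^(beta d j)

lemma bits_ge (k : ℕ) : 2 ≤ bits d k := by
  unfold bits
  split
  · have := beta_ge d (k/2); omega
  · exact tseq_ge d (k/2)

lemma Mb_ge (k : ℕ) : 4 ≤ Mb d k := by
  calc (4:ℕ) = 2^2 := by norm_num
  _ ≤ 2^(bits d k) := Nat.pow_le_pow_right (by norm_num) (bits_ge d k)

lemma Bd_ge (j : ℕ) : 4 ≤ Bd d j := by
  calc (4:ℕ) = 2^2 := by norm_num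
  _ ≤ 2^(beta d j) := Nat.pow_le_pow_right (by norm_num) (by have := beta_ge d j; omega)

lemma Bd_pos (j : ℕ) : 0 < Bd d j := by have := Bd_ge d j; omega

lemma Mb_even (j : ℕ) : Mb d (2*j) = 4 * Bd d j := by
  unfold Mb bits Bd
  have h1 : (2*j) % 2 = 0 := by omega
  have h2 : (2*j) / 2 = j := by omega
  rw [if_pos h1, h2, pow_add]
  ring

lemma Mb_odd (ν : ℕ) : Mb d (2*ν+1) = 2^(tseq d ν) := by
  unfold Mb bits
  have h1 : (2*ν+1) % 2 = 1 := by omega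
  have h2 : (2*ν+1) / 2 = ν := by omega
  rw [if_neg (by omega), h2]

/-- the parameter space -/
abbrev X := ∀ j : ℕ, Fin d → Fin (Bd d j)

/-- code of the pair of digit tuples referenced by forced position handling pair `ν-2` -/
def code (x : X d) (ν : ℕ) : ℕ :=
  ∑ i : Fin d,
    ((x (Nat.unpair (ν-2)).1 i : ℕ)
      + Bd d (Nat.unpair (ν-2)).1 * (x (Nat.unpair (ν-2)).2 i : ℕ))
    * (Bd d (Nat.unpair (ν-2)).1 * Bd d (Nat.unpair (ν-2)).2)^(i : ℕ)

lemma code_digit_lt (x : X d) (ν : ℕ) (i : Fin d) :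
    (x (Nat.unpair (ν-2)).1 i : ℕ)
      + Bd d (Nat.unpair (ν-2)).1 * (x (Nat.unpair (ν-2)).2 i : ℕ)
    < Bd d (Nat.unpair (ν-2)).1 * Bd d (Nat.unpair (ν-2)).2 := by
  set p := (Nat.unpair (ν-2)).1
  set q := (Nat.unpair (ν-2)).2
  have h1 : (x p i : ℕ) < Bd d p := (x p i).isLt
  have h2 : (x q i : ℕ) < Bd d q := (x q i).isLt
  have h3 : Bd d p * (x q i : ℕ) ≤ Bd d p * (Bd d q - 1) := by
    apply Nat.mul_le_mul_left; omega
  have h4 : Bd d p * (Bd d q - 1) = Bd d p * Bd d q - Bd d p := by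
    rw [Nat.mul_sub, Nat.mul_one]
  have h5 := Bd_pos d p
  have h6 := Bd_pos d q
  have h7 : Bd d p ≤ Bd d p * Bd d q := Nat.le_mul_of_pos_right _ h6
  omega

lemma code_lt (x : X d) (ν : ℕ) :
    code d x ν < (Bd d (Nat.unpair (ν-2)).1 * Bd d (Nat.unpair (ν-2)).2)^d := by
  apply sum_base_lt
  · exact Nat.mul_pos (Bd_pos d _) (Bd_pos d _)
  · exact fun i => code_digit_lt d x ν i

lemma code_inj (x y : X d) (ν : ℕ) (h : code d x ν = code d y ν) :
    x (Nat.unpair (ν-2)).1 = y (Nat.unpair (ν-2)).1 ∧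
    x (Nat.unpair (ν-2)).2 = y (Nat.unpair (ν-2)).2 := by
  set p := (Nat.unpair (ν-2)).1
  set q := (Nat.unpair (ν-2)).2
  have hK : 0 < Bd d p * Bd d q := Nat.mul_pos (Bd_pos d p) (Bd_pos d q)
  have hrepr := repr_inj hK
    (fun i => (x p i : ℕ) + Bd d p * (x q i : ℕ))
    (fun i => (y p i : ℕ) + Bd d p * (y q i : ℕ))
    (fun i => code_digit_lt d x ν i)
    (fun i => code_digit_lt d y ν i) h
  have hdig : ∀ i : Fin d, (x p i : ℕ) = (y p i : ℕ) ∧ (x q i : ℕ) = (y q i : ℕ) := by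
    intro i
    have e := congrFun hrepr i
    have h1 : (x p i : ℕ) < Bd d p := (x p i).isLt
    have h2 : (y p i : ℕ) < Bd d p := (y p i).isLt
    have m1 : ((x p i : ℕ) + Bd d p * (x q i : ℕ)) % Bd d p = (x p i : ℕ) := by
      rw [Nat.mul_comm, Nat.add_mul_mod_self_right, Nat.mod_eq_of_lt h1]
    have m2 : ((y p i : ℕ) + Bd d p * (y q i : ℕ)) % Bd d p = (y p i : ℕ) := by
      rw [Nat.mul_comm, Nat.add_mul_mod_self_right, Nat.mod_eq_of_lt h2]
    have hpp : (x p i : ℕ) = (y p i : ℕ) := by rw [← m1, ← m2, e]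
    refine ⟨hpp, ?_⟩
    have hmul : Bd d p * (x q i : ℕ) = Bd d p * (y q i : ℕ) := by omega
    exact Nat.eq_of_mul_eq_mul_left (Bd_pos d p) hmul
  constructor
  · funext i; exact Fin.ext (hdig i).1
  · funext i; exact Fin.ext (hdig i).2

/-- the digit of `x` at position `k` in coordinate `i` -/
def Dg (x : X d) (k : ℕ) (i : Fin d) : ℕ :=
  if k % 2 = 0 then (x (k/2) i : ℕ)
  else if 2 ≤ k/2 ∧ (i : ℕ) = 0 then 2^(code d x (k/2)) else 0

lemma pow_prod_eq (p q : ℕ) :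
    (Bd d p * Bd d q)^d = 2^(d * (beta d p + beta d q)) := by
  unfold Bd
  rw [← pow_add, ← pow_mul, Nat.mul_comm d]

lemma Dg_bound (x : X d) (k : ℕ) (i : Fin d) : 4 * Dg d x k i + 1 ≤ Mb d k := by
  unfold Dg
  rcases Nat.even_or_odd k with ⟨j, hj⟩ | ⟨j, hj⟩
  · have hk : k = 2*j := by omega
    subst hk
    rw [if_pos (by omega), Mb_even]
    have h1 : ((x (2*j/2) i : ℕ)) < Bd d (2*j/2) := (x _ i).isLt
    have h2 : (2*j)/2 = j := by omega
    rw [h2] at h1 ⊢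
    omega
  · have hk : k = 2*j+1 := by omega
    subst hk
    rw [if_neg (by omega)]
    have h2 : (2*j+1)/2 = j := by omega
    rw [h2, Mb_odd]
    split
    · rename_i hcond
      have hν : 2 ≤ j := hcond.1
      have hcode : code d x j < 2^(d * (beta d (Nat.unpair (j-2)).1 + beta d (Nat.unpair (j-2)).2)) := by
        rw [← pow_prod_eq]
        exact code_lt d x j
      set P : ℕ := 2^(d * (beta d (Nat.unpair (j-2)).1 + beta d (Nat.unpair (j-2)).2)) with hP
      have htseq : tseq d j = P + 2 := by
        unfold tseq tOf
        rw [if_pos hν]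
      rw [htseq]
      have h3 : 4 * 2^(code d x j) = 2^(code d x j + 2) := by
        rw [pow_add]; ring
      rw [h3]
      have h4 : code d x j + 2 ≤ P + 1 := by omega
      have h5 : (2:ℕ)^(code d x j + 2) ≤ 2^(P+1) := Nat.pow_le_pow_right (by norm_num) h4
      have h6 : (2:ℕ)^(P+1) + 1 ≤ 2^(P+2) := by
        have : (2:ℕ)^(P+2) = 2 * 2^(P+1) := by rw [pow_succ]; ring
        have h7 : 1 ≤ (2:ℕ)^(P+1) := Nat.one_le_two_pow
        omega
      omega
    · have := Mb_ge d (2*j+1)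
      rw [Mb_odd] at this
      omega

lemma Dg_le (x : X d) (k : ℕ) (i : Fin d) : Dg d x k i ≤ Mb d k - 1 := by
  have := Dg_bound d x k i; omega

lemma Dg_le2 (x : X d) (k : ℕ) (i : Fin d) : Dg d x k i ≤ Mb d k - 2 := by
  have := Dg_bound d x k i; have := Mb_ge d k; omega

/-- forced digits only depend on earlier free digits -/
lemma Dg_agree (x y : X d) (j₀ : ℕ) (hagree : ∀ j < j₀, x j = y j) :
    ∀ k < 2*j₀, ∀ i, Dg d x k i = Dg d y k i := by
  intro k hk i
  unfold Dg
  rcases Nat.even_or_odd k with ⟨j, hj⟩ | ⟨j, hj⟩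
  · have hk0 : k % 2 = 0 := by omega
    have h2 : k/2 = j := by omega
    rw [if_pos hk0, if_pos hk0, h2, hagree j (by omega)]
  · have hk0 : ¬ (k % 2 = 0) := by omega
    have h2 : k/2 = j := by omega
    rw [if_neg hk0, if_neg hk0, h2]
    by_cases hcond : 2 ≤ j ∧ (i : ℕ) = 0
    · rw [if_pos hcond, if_pos hcond]
      have hν : 2 ≤ j := hcond.1
      have hp := Nat.unpair_left_le (j-2)
      have hq := Nat.unpair_right_le (j-2)
      have hxp : x (Nat.unpair (j-2)).1 = y (Nat.unpair (j-2)).1 := hagree _ (by omega)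
      have hxq : x (Nat.unpair (j-2)).2 = y (Nat.unpair (j-2)).2 := hagree _ (by omega)
      unfold code
      rw [hxp, hxq]
    · rw [if_neg hcond, if_neg hcond]

/-- the map realizing the Cantor set -/
noncomputable def Phi (x : X d) : EuclideanSpace ℝ (Fin d) :=
  (EuclideanSpace.equiv (Fin d) ℝ).symm (fun i => S (Mb d) (fun k => Dg d x k i))

lemma Phi_apply (x : X d) (i : Fin d) : Phi d x i = S (Mb d) (fun k => Dg d x k i) := rfl

/-- the comparison (Hölder) map reading off free digits -/
noncomputable def Psi (x : X d) : EuclideanSpace ℝ (Fin d) :=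
  (EuclideanSpace.equiv (Fin d) ℝ).symm (fun i => S (Bd d) (fun j => (x j i : ℕ)))

lemma Psi_apply (x : X d) (i : Fin d) : Psi d x i = S (Bd d) (fun j => (x j i : ℕ)) := rfl

lemma continuous_Phi : Continuous (Phi d) := by
  apply Continuous.comp (EuclideanSpace.equiv (Fin d) ℝ).symm.continuous
  apply continuous_pi
  intro i
  apply continuous_tsum
    (u := fun k => ((Mb d k - 1 : ℕ) : ℝ)/(W (Mb d) (k+1)))
  · intro k
    have hD : Continuous fun x : X d => (Dg d x k i : ℝ) := by
      apply Continuous.comp (continuous_of_discreteTopology (α := ℕ) (f := fun n : ℕ => (n : ℝ)))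
      rcases Nat.even_or_odd k with ⟨j, hj⟩ | ⟨j, hj⟩
      · have hk : k % 2 = 0 := by omega
        have h2 : k / 2 = j := by omega
        have : (fun x : X d => Dg d x k i) =
            (fun v : Fin d → Fin (Bd d j) => (v i : ℕ)) ∘ (fun x : X d => x j) := by
          funext x
          simp only [Dg, if_pos hk, Function.comp]
          rw [h2]
        rw [this]
        exact Continuous.comp continuous_of_discreteTopology (continuous_apply j)
      · have hk : ¬ (k % 2 = 0) := by omega
        have h2 : k / 2 = j := by omega
        by_cases hcond : 2 ≤ j ∧ (i : ℕ) = 0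
        · set p := (Nat.unpair (j-2)).1
          set q := (Nat.unpair (j-2)).2
          have : (fun x : X d => Dg d x k i) =
              (fun vw : (Fin d → Fin (Bd d p)) × (Fin d → Fin (Bd d q)) =>
                2^(∑ i' : Fin d,
                  ((vw.1 i' : ℕ) + Bd d p * (vw.2 i' : ℕ)) * (Bd d p * Bd d q)^(i' : ℕ)))
              ∘ (fun x : X d => (x p, x q)) := by
            funext x
            simp only [Dg, if_neg hk, Function.comp, code]
            rw [h2, if_pos hcond]
          rw [this]
          exact Continuous.comp continuous_of_discreteTopology
            ((continuous_apply p).prodMk (continuous_apply q))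
        · have : (fun x : X d => Dg d x k i) = fun _ => 0 := by
            funext x
            simp only [Dg, if_neg hk, h2, if_neg hcond]
          rw [this]
          exact continuous_const
    exact hD.div_const _
  · exact summable_digits (Mb d) (Mb_ge d) _ (fun k => le_refl _)
  · intro k x
    rw [Real.norm_eq_abs, abs_div, abs_of_pos (W_cast_pos (Mb d) (Mb_ge d) (k+1)),
      abs_of_nonneg (by positivity : (0:ℝ) ≤ (Dg d x k i : ℝ))]
    apply div_le_div_same' _ (W_cast_pos (Mb d) (Mb_ge d) (k+1))
    exact_mod_cast Dg_le d x k i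

lemma Phi_inj : Function.Injective (Phi d) := by
  intro x y hxy
  by_contra hne
  have hex : ∃ j, x j ≠ y j := by
    by_contra h
    push_neg at h
    exact hne (funext h)
  classical
  let j₀ := Nat.find hex
  have hj₀ : x j₀ ≠ y j₀ := Nat.find_spec hex
  have hagree : ∀ j, j < j₀ → x j = y j := by
    intro j hj
    by_contra h
    exact (Nat.find_min hex hj) h
  have hexi : ∃ i : Fin d, x j₀ i ≠ y j₀ i := by
    by_contra h
    push_neg at h
    exact hj₀ (funext h)
  obtain ⟨i, hi⟩ := hexi
  have hSeq : S (Mb d) (fun k => Dg d x k i) = S (Mb d) (fun k => Dg d y k i) := by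
    rw [← Phi_apply, ← Phi_apply, hxy]
  have hdig := S_inj (Mb d) (Mb_ge d) _ _ (fun k => Dg_le2 d x k i) (fun k => Dg_le2 d y k i) hSeq
  have this1 : Dg d x (2*j₀) i = Dg d y (2*j₀) i := congrFun hdig (2*j₀)
  have hk0 : (2*j₀) % 2 = 0 := by omega
  have h2 : (2*j₀)/2 = j₀ := by omega
  have ex : Dg d x (2*j₀) i = (x j₀ i : ℕ) := by unfold Dg; rw [if_pos hk0, h2]
  have ey : Dg d y (2*j₀) i = (y j₀ i : ℕ) := by unfold Dg; rw [if_pos hk0, h2]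
  rw [ex, ey] at this1
  exact hi (Fin.ext this1)

end Construction
end Maga

namespace Maga

lemma S_add (M : ℕ → ℕ) (hM : ∀ k, 4 ≤ M k) (a b : ℕ → ℕ)
    (ha : ∀ k, a k ≤ M k - 1) (hb : ∀ k, b k ≤ M k - 1) :
    S M (fun k => a k + b k) = S M a + S M b := by
  rw [S, S, S, ← Summable.tsum_add (summable_digits M hM a ha) (summable_digits M hM b hb)]
  apply tsum_congr
  intro k
  push_cast
  rw [add_div]

/-- variant of `S_sub_upper` with the distance of the `m`-th digits -/
lemma S_sub_upper' (M : ℕ → ℕ) (hM : ∀ k, 4 ≤ M k) (a b : ℕ → ℕ)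
    (ha : ∀ k, a k ≤ M k - 1) (hb : ∀ k, b k ≤ M k - 1)
    (m : ℕ) (hagree : ∀ k < m, a k = b k) :
    |S M a - S M b| ≤ (|(a m : ℝ) - (b m : ℝ)| + 1)/(W M (m+1)) := by
  have hdec := S_sub_decomp M hM a b ha hb m hagree
  have hW := W_cast_pos M hM (m+1)
  have hrem := remainder_le M hM a b ha hb m (1/(W M (m+1)))
    (by
      intro n
      rcases Nat.lt_or_ge n (m+1) with h | h
      · have he : Finset.Ico (m+1) n = ∅ := by apply Finset.Ico_eq_empty; omega
        rw [he, Finset.sum_empty]; positivity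
      · have h1 := sum_Ico_le M hM (fun k => max (a k) (b k))
          (fun k => by
            show max (a k) (b k) ≤ M k - 1
            exact max_le (ha k) (hb k)) h
        have : 0 ≤ 1/(W M n : ℝ) := by positivity
        linarith)
  have hD : |((a m : ℝ) - b m)/(W M (m+1))| = |(a m : ℝ) - (b m : ℝ)|/(W M (m+1)) := by
    rw [abs_div, abs_of_pos hW]
  rw [hdec, add_div]
  calc |((a m : ℝ) - b m)/(W M (m+1)) + _|
      ≤ |((a m : ℝ) - b m)/(W M (m+1))| + _ := abs_add_le _ _
    _ ≤ |(a m : ℝ) - (b m : ℝ)|/(W M (m+1)) + 1/(W M (m+1)) := by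
        rw [hD]
        exact add_le_add (le_refl _) hrem

section NoPara
variable (d : ℕ)

lemma Dg_forced (x : X d) (ν : ℕ) (hν : 2 ≤ ν) (i : Fin d) (hi : (i : ℕ) = 0) :
    Dg d x (2*ν+1) i = 2^(code d x ν) := by
  unfold Dg
  rw [if_neg (by omega : ¬ ((2*ν+1) % 2 = 0))]
  have h2 : (2*ν+1)/2 = ν := by omega
  rw [h2, if_pos ⟨hν, hi⟩]

theorem no_parallelogram (hd : 0 < d) (xa xb xc xe : X d)
    (hsum : Phi d xa + Phi d xc = Phi d xb + Phi d xe)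
    (hab : Phi d xa ≠ Phi d xb) (hae : Phi d xa ≠ Phi d xe) : False := by
  have hMb := Mb_ge d
  -- digitwise relation
  have hrel : ∀ k (i : Fin d), Dg d xa k i + Dg d xc k i = Dg d xb k i + Dg d xe k i := by
    have main : ∀ i : Fin d,
        (fun k => Dg d xa k i + Dg d xc k i) = (fun k => Dg d xb k i + Dg d xe k i) := by
      intro i
      apply S_inj (Mb d) hMb
      · intro k
        have h1 := Dg_bound d xa k i
        have h2 := Dg_bound d xc k i
        omega
      · intro k
        have h1 := Dg_bound d xb k i
        have h2 := Dg_bound d xe k i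
        omega
      · rw [S_add (Mb d) hMb _ _ (fun k => Dg_le d xa k i) (fun k => Dg_le d xc k i),
          S_add (Mb d) hMb _ _ (fun k => Dg_le d xb k i) (fun k => Dg_le d xe k i)]
        rw [← Phi_apply, ← Phi_apply, ← Phi_apply, ← Phi_apply]
        have h1 : (Phi d xa + Phi d xc) i = Phi d xa i + Phi d xc i := rfl
        have h2 : (Phi d xb + Phi d xe) i = Phi d xb i + Phi d xe i := rfl
        rw [← h1, ← h2, hsum]
    intro k i
    exact congrFun (main i) k
  -- xa and xb differ at some free index
  have hex : ∃ j, xa j ≠ xb j := by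
    by_contra h
    push_neg at h
    exact hab (congrArg (Phi d) (funext h))
  obtain ⟨j, hj⟩ := hex
  -- xa and xe agree at every free index
  have hkey : ∀ j', xa j' = xe j' := by
    intro j'
    set ν := Nat.pair j j' + 2 with hν
    have hν2 : 2 ≤ ν := by omega
    have hunpair : (Nat.unpair (ν - 2)) = (j, j') := by
      rw [hν]
      simp [Nat.unpair_pair]
    set i0 : Fin d := ⟨0, hd⟩ with hi0
    have hrel0 := hrel (2*ν+1) i0
    rw [Dg_forced d xa ν hν2 i0 rfl, Dg_forced d xb ν hν2 i0 rfl,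
      Dg_forced d xc ν hν2 i0 rfl, Dg_forced d xe ν hν2 i0 rfl] at hrel0
    rcases pow2_sidon hrel0 with ⟨h1, _⟩ | ⟨h1, _⟩
    · -- code xa = code xb : contradiction with xa j ≠ xb j
      have := (code_inj d xa xb ν h1).1
      rw [hunpair] at this
      exact absurd this hj
    · -- code xa = code xe
      have := (code_inj d xa xe ν h1).2
      rw [hunpair] at this
      exact this
  exact hae (congrArg (Phi d) (funext hkey))

end NoPara
end Maga

namespace Maga
section Holder
variable (d : ℕ)

/-- total number of binary digits of the first `m` bases -/
def Ebits (m : ℕ) : ℕ := ∑ k ∈ Finset.range m, bits d k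

/-- total number of binary digits of the first `j` free positions -/
def Fq (j : ℕ) : ℕ := ∑ ν ∈ Finset.range j, beta d ν

/-- the "wasted" bits up to free position `j₀` -/
def Delta (j₀ : ℕ) : ℕ := 2*(j₀+1) + ∑ ν ∈ Finset.range j₀, tseq d ν

lemma W_Mb_pow (m : ℕ) : W (Mb d) m = 2^(Ebits d m) := by
  induction m with
  | zero => rfl
  | succ m ih =>
      rw [W_succ, ih]
      unfold Ebits
      rw [Finset.sum_range_succ, pow_add]
      rfl

lemma W_Bd_pow (j : ℕ) : W (Bd d) j = 2^(Fq d j) := by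
  induction j with
  | zero => rfl
  | succ j ih =>
      rw [W_succ, ih]
      unfold Fq
      rw [Finset.sum_range_succ, pow_add]
      rfl

lemma bits_even (j : ℕ) : bits d (2*j) = beta d j + 2 := by
  unfold bits
  rw [if_pos (by omega : (2*j) % 2 = 0), show (2*j)/2 = j by omega]

lemma bits_odd (j : ℕ) : bits d (2*j+1) = tseq d j := by
  unfold bits
  rw [if_neg (by omega : ¬ ((2*j+1) % 2 = 0)), show (2*j+1)/2 = j by omega]

lemma Ebits_odd_formula (j₀ : ℕ) :
    Ebits d (2*j₀+1) = Fq d j₀ + beta d j₀ + Delta d j₀ := by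
  induction j₀ with
  | zero =>
      have h0 : bits d 0 = beta d 0 + 2 := by
        have h := bits_even d 0
        rw [Nat.mul_zero] at h
        exact h
      unfold Ebits Fq Delta
      rw [show 2*0+1 = 1 by rfl, Finset.sum_range_one, h0,
        Finset.sum_range_zero, Finset.sum_range_zero]
      omega
  | succ j ih =>
      have e1 : 2*(j+1)+1 = (2*j+1) + 1 + 1 := by ring
      rw [e1]
      unfold Ebits
      rw [Finset.sum_range_succ, Finset.sum_range_succ]
      have e2 : 2*j+1+1 = 2*(j+1) := by ring
      rw [show (∑ k ∈ Finset.range (2*j+1), bits d k) = Ebits d (2*j+1) from rfl, ih]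
      rw [bits_odd d j, e2, bits_even d (j+1)]
      unfold Fq Delta
      rw [Finset.sum_range_succ (f := fun ν => beta d ν) j,
        Finset.sum_range_succ (f := fun ν => tseq d ν) j]
      ring

lemma Delta_le_beta (m : ℕ) : (m+1) * Delta d (m+1) ≤ beta d m := by
  rw [beta_formula]
  unfold Delta
  apply Nat.mul_le_mul_left
  have h1 : ∑ ν ∈ Finset.range (m+1), tseq d ν ≤ ∑ ν ∈ Finset.range (m+2), tseq d ν := by
    apply Finset.sum_le_sum_of_subset
    apply Finset.range_subset_range.mpr
    omega
  omega

lemma beta_le_Fq (m : ℕ) : beta d m ≤ Fq d (m+1) := by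
  unfold Fq
  rw [Finset.sum_range_succ]
  omega

lemma Ebits_mono {m m' : ℕ} (h : m ≤ m') : Ebits d m ≤ Ebits d m' := by
  unfold Ebits
  apply Finset.sum_le_sum_of_subset
  exact Finset.range_subset_range.mpr h

/-- the (log₂ of the) Hölder constant -/
def cN (n : ℕ) : ℕ := 2 * Ebits d (2*(n+1)+1) + d

lemma key_ineq (n j₀ : ℕ) :
    n * Ebits d (2*j₀+1) + (n+1) * d ≤ (n+1) * cN d n + (n+1) * Fq d j₀ + n * beta d j₀ := by
  rcases Nat.lt_or_ge j₀ (n+1) with hsmall | hbig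
  · -- j₀ ≤ n
    have h1 : Ebits d (2*j₀+1) ≤ Ebits d (2*(n+1)+1) := Ebits_mono d (by omega)
    have h2 : n * Ebits d (2*j₀+1) ≤ n * Ebits d (2*(n+1)+1) := Nat.mul_le_mul_left n h1
    have h3 : (n+1) * cN d n = (n+1) * (2 * Ebits d (2*(n+1)+1)) + (n+1) * d := by
      unfold cN; ring
    have h4 : n * Ebits d (2*(n+1)+1) ≤ (n+1) * (2 * Ebits d (2*(n+1)+1)) := by
      have : n ≤ (n+1) * 2 := by omega
      calc n * Ebits d (2*(n+1)+1) ≤ ((n+1) * 2) * Ebits d (2*(n+1)+1) :=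
            Nat.mul_le_mul_right _ this
      _ = (n+1) * (2 * Ebits d (2*(n+1)+1)) := by ring
    omega
  · -- n + 1 ≤ j₀, in particular j₀ = m+1
    obtain ⟨m, rfl⟩ : ∃ m, j₀ = m + 1 := ⟨j₀ - 1, by omega⟩
    have hE := Ebits_odd_formula d (m+1)
    have hd1 : (m+1) * Delta d (m+1) ≤ beta d m := Delta_le_beta d m
    have hd2 : beta d m ≤ Fq d (m+1) := beta_le_Fq d m
    have hd3 : n * Delta d (m+1) ≤ (m+1) * Delta d (m+1) := Nat.mul_le_mul_right _ (by omega)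
    have hd4 : n * Delta d (m+1) ≤ Fq d (m+1) := le_trans hd3 (le_trans hd1 hd2)
    have e1 : n * Ebits d (2*(m+1)+1)
        = n * Fq d (m+1) + n * beta d (m+1) + n * Delta d (m+1) := by
      rw [hE]; ring
    have e2 : (n+1) * Fq d (m+1) = n * Fq d (m+1) + Fq d (m+1) := by ring
    have e3 : (n+1) * d ≤ (n+1) * cN d n := by
      apply Nat.mul_le_mul_left
      unfold cN
      omega
    omega

end Holder
end Maga

set_option maxHeartbeats 1000000
namespace Maga

lemma nat_absdiff_cast (a b : ℕ) : ((max a b - min a b : ℕ) : ℝ) = |(a:ℝ) - (b:ℝ)| := by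
  rcases le_total a b with h | h
  · have h' : (a:ℝ) ≤ b := by exact_mod_cast h
    rw [max_eq_right h, min_eq_left h, Nat.cast_sub h, abs_sub_comm,
      abs_of_nonneg (by linarith : (0:ℝ) ≤ (b:ℝ) - (a:ℝ))]
  · have h' : (b:ℝ) ≤ a := by exact_mod_cast h
    rw [max_eq_left h, min_eq_right h, Nat.cast_sub h,
      abs_of_nonneg (by linarith : (0:ℝ) ≤ (a:ℝ) - (b:ℝ))]

section Dist
variable {d : ℕ}

lemma coord_dist_le (z w : EuclideanSpace ℝ (Fin d)) (i : Fin d) :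
    dist (z i) (w i) ≤ dist z w := by
  rw [EuclideanSpace.dist_eq]
  have h1 : dist (z i) (w i)^2 ≤ ∑ i', dist (z i') (w i')^2 :=
    Finset.single_le_sum (f := fun i' => dist (z i') (w i')^2)
      (fun i' _ => sq_nonneg _) (Finset.mem_univ i)
  calc dist (z i) (w i) = Real.sqrt (dist (z i) (w i)^2) := (Real.sqrt_sq dist_nonneg).symm
  _ ≤ Real.sqrt (∑ i', dist (z i') (w i')^2) := Real.sqrt_le_sqrt h1

lemma dist_le_sqrt_mul (z w : EuclideanSpace ℝ (Fin d)) (c : ℝ) (hc : 0 ≤ c)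
    (h : ∀ i, dist (z i) (w i) ≤ c) : dist z w ≤ Real.sqrt d * c := by
  rw [EuclideanSpace.dist_eq]
  have h1 : ∑ i, dist (z i) (w i)^2 ≤ ∑ _i : Fin d, c^2 :=
    Finset.sum_le_sum (fun i _ => pow_le_pow_left₀ dist_nonneg (h i) 2)
  have h2 : ∑ _i : Fin d, c^2 = (d:ℝ) * c^2 := by
    rw [Finset.sum_const, Finset.card_univ, Fintype.card_fin, nsmul_eq_mul]
  calc Real.sqrt (∑ i, dist (z i) (w i)^2)
      ≤ Real.sqrt ((d:ℝ) * c^2) := Real.sqrt_le_sqrt (by rw [← h2]; exact h1)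
  _ = Real.sqrt d * Real.sqrt (c^2) := Real.sqrt_mul (by positivity) _
  _ = Real.sqrt d * c := by rw [Real.sqrt_sq hc]

end Dist

section Core
variable (d : ℕ)

lemma Dg_free (x : X d) (j : ℕ) (i : Fin d) : Dg d x (2*j) i = (x j i : ℕ) := by
  unfold Dg
  rw [if_pos (by omega : (2*j) % 2 = 0), show (2*j)/2 = j by omega]

theorem holder_core (hd : 0 < d) (n : ℕ) (x y : X d) :
    dist (Psi d x) (Psi d y)
      ≤ (2:ℝ)^(cN d n + 2) * dist (Phi d x) (Phi d y) ^ ((n:ℝ)/((n:ℝ)+1)) := by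
  have hMb := Mb_ge d
  have hBd := Bd_ge d
  set α : ℝ := (n:ℝ)/((n:ℝ)+1) with hα
  have hden : (0:ℝ) < (n:ℝ)+1 := by positivity
  have hα0 : 0 ≤ α := by positivity
  have hα1 : α ≤ 1 := by
    rw [hα, div_le_one hden]; linarith
  by_cases hxy : x = y
  · subst hxy
    simp only [dist_self]
    positivity
  have hex : ∃ j, x j ≠ y j := by
    by_contra h
    push_neg at h
    exact hxy (funext h)
  classical
  set j₀ := Nat.find hex with hj₀def
  have hj₀ : x j₀ ≠ y j₀ := Nat.find_spec hex
  have hagree : ∀ j, j < j₀ → x j = y j := by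
    intro j hj
    by_contra h
    exact (Nat.find_min hex hj) h
  set δ : Fin d → ℕ := fun i => max (x j₀ i : ℕ) (y j₀ i : ℕ) - min (x j₀ i : ℕ) (y j₀ i : ℕ)
    with hδdef
  obtain ⟨i0, -, hmax⟩ := Finset.exists_max_image Finset.univ δ ⟨⟨0, hd⟩, Finset.mem_univ _⟩
  have hδ1 : 1 ≤ δ i0 := by
    have hexi : ∃ i : Fin d, x j₀ i ≠ y j₀ i := by
      by_contra h
      push_neg at h
      exact hj₀ (funext h)
    obtain ⟨i', hi'⟩ := hexi
    have hvne : (x j₀ i' : ℕ) ≠ (y j₀ i' : ℕ) := fun h => hi' (Fin.ext h)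
    have : 1 ≤ δ i' := by simp only [hδdef]; omega
    exact le_trans this (hmax i' (Finset.mem_univ _))
  set Wm : ℝ := (W (Mb d) (2*j₀+1) : ℝ) with hWmdef
  set Qm : ℝ := (W (Bd d) (j₀+1) : ℝ) with hQmdef
  set B : ℝ := (Bd d j₀ : ℝ) with hBdef
  set δr : ℝ := (δ i0 : ℝ) with hδrdef
  have hWmpos : 0 < Wm := W_cast_pos (Mb d) hMb _
  have hQmpos : 0 < Qm := W_cast_pos (Bd d) hBd _
  have hδrpos : (0:ℝ) < δr := by
    rw [hδrdef]; exact_mod_cast hδ1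
  have hδr1 : (1:ℝ) ≤ δr := by
    rw [hδrdef]; exact_mod_cast hδ1
  have hδrB : δr ≤ B := by
    rw [hδrdef, hBdef]
    have h1 : δ i0 ≤ Bd d j₀ := by
      have hx := (x j₀ i0).isLt
      have hy := (y j₀ i0).isLt
      simp only [hδdef]
      omega
    exact_mod_cast h1
  -- lower bound on dist (Phi x) (Phi y)
  have hlow : (3/4) * (δr / Wm) ≤ dist (Phi d x) (Phi d y) := by
    have hagreeD : ∀ k < 2*j₀, Dg d x k i0 = Dg d y k i0 :=
      fun k hk => Dg_agree d x y j₀ hagree k hk i0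
    have hxd : Dg d x (2*j₀) i0 = (x j₀ i0 : ℕ) := Dg_free d x j₀ i0
    have hyd : Dg d y (2*j₀) i0 = (y j₀ i0 : ℕ) := Dg_free d y j₀ i0
    have hcoord := coord_dist_le (Phi d x) (Phi d y) i0
    rw [Real.dist_eq, Phi_apply, Phi_apply] at hcoord
    have habs : (3/4) * (δr / Wm) ≤
        |S (Mb d) (fun k => Dg d x k i0) - S (Mb d) (fun k => Dg d y k i0)| := by
      rcases Nat.lt_or_ge (y j₀ i0 : ℕ) (x j₀ i0 : ℕ) with hlt | hge
      · have hl := S_sub_lower (Mb d) hMb _ _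
          (fun k => Dg_bound d x k i0) (fun k => Dg_bound d y k i0) (2*j₀)
          hagreeD (by rw [hxd, hyd]; exact hlt)
        have he : ((Dg d x (2*j₀) i0 : ℝ) - (Dg d y (2*j₀) i0 : ℝ)) = δr := by
          rw [hxd, hyd, hδrdef]
          simp only [hδdef]
          rw [Nat.cast_sub (by omega : min (x j₀ i0 : ℕ) (y j₀ i0 : ℕ) ≤ max (x j₀ i0 : ℕ) (y j₀ i0 : ℕ))]
          rw [max_eq_left (by omega : (y j₀ i0 : ℕ) ≤ (x j₀ i0 : ℕ)),
            min_eq_right (by omega : (y j₀ i0 : ℕ) ≤ (x j₀ i0 : ℕ))]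
        rw [he] at hl
        calc (3/4) * (δr / Wm) ≤ S (Mb d) (fun k => Dg d x k i0) - S (Mb d) (fun k => Dg d y k i0) := hl
        _ ≤ |S (Mb d) (fun k => Dg d x k i0) - S (Mb d) (fun k => Dg d y k i0)| := le_abs_self _
      · have hlt : (x j₀ i0 : ℕ) < (y j₀ i0 : ℕ) := by
          rcases Nat.lt_or_ge (x j₀ i0 : ℕ) (y j₀ i0 : ℕ) with h | h
          · exact h
          · exfalso
            have : (x j₀ i0 : ℕ) = (y j₀ i0 : ℕ) := by omega
            have : δ i0 = 0 := by simp only [hδdef]; omega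
            omega
        have hl := S_sub_lower (Mb d) hMb _ _
          (fun k => Dg_bound d y k i0) (fun k => Dg_bound d x k i0) (2*j₀)
          (fun k hk => (hagreeD k hk).symm) (by rw [hxd, hyd]; exact hlt)
        have he : ((Dg d y (2*j₀) i0 : ℝ) - (Dg d x (2*j₀) i0 : ℝ)) = δr := by
          rw [hxd, hyd, hδrdef]
          simp only [hδdef]
          rw [Nat.cast_sub (by omega : min (x j₀ i0 : ℕ) (y j₀ i0 : ℕ) ≤ max (x j₀ i0 : ℕ) (y j₀ i0 : ℕ))]
          rw [max_eq_right (by omega : (x j₀ i0 : ℕ) ≤ (y j₀ i0 : ℕ)),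
            min_eq_left (by omega : (x j₀ i0 : ℕ) ≤ (y j₀ i0 : ℕ))]
        rw [he] at hl
        calc (3/4) * (δr / Wm)
            ≤ S (Mb d) (fun k => Dg d y k i0) - S (Mb d) (fun k => Dg d x k i0) := hl
        _ ≤ |S (Mb d) (fun k => Dg d x k i0) - S (Mb d) (fun k => Dg d y k i0)| := by
            rw [abs_sub_comm]; exact le_abs_self _
    linarith
  -- upper bound on dist (Psi x) (Psi y)
  have hupp : dist (Psi d x) (Psi d y) ≤ Real.sqrt d * ((δr + 1)/Qm) := by
    apply dist_le_sqrt_mul _ _ _ (by positivity)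
    intro i
    rw [Psi_apply, Psi_apply, Real.dist_eq]
    have hup := S_sub_upper' (Bd d) hBd (fun j => (x j i : ℕ)) (fun j => (y j i : ℕ))
      (fun j => by
        have := (x j i).isLt
        show (x j i : ℕ) ≤ Bd d j - 1
        omega)
      (fun j => by
        have := (y j i).isLt
        show (y j i : ℕ) ≤ Bd d j - 1
        omega)
      j₀ (fun j hj => by
        show ((x j i : ℕ)) = ((y j i : ℕ))
        rw [hagree j hj])
    have habsle : |((x j₀ i : ℕ) : ℝ) - ((y j₀ i : ℕ) : ℝ)| ≤ δr := by
      rw [← nat_absdiff_cast]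
      rw [hδrdef]
      exact_mod_cast hmax i (Finset.mem_univ _)
    calc |S (Bd d) (fun j => (x j i : ℕ)) - S (Bd d) (fun j => (y j i : ℕ))|
        ≤ (|((x j₀ i : ℕ) : ℝ) - ((y j₀ i : ℕ) : ℝ)| + 1)/(W (Bd d) (j₀+1)) := hup
    _ ≤ (δr + 1)/Qm := by
        apply div_le_div_same' _ hQmpos
        linarith
  -- the main scalar inequality
  have hsqrtd : Real.sqrt d ≤ (2:ℝ)^(d:ℕ) := by
    have hnat : d ≤ 4^d :=
      le_trans (Nat.le_of_lt (Nat.lt_two_pow_self (n := d))) (Nat.pow_le_pow_left (by norm_num) d)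
    have h1 : (d:ℝ) ≤ ((2:ℝ)^(d:ℕ))^2 := by
      calc (d:ℝ) ≤ ((4^d : ℕ):ℝ) := by exact_mod_cast hnat
      _ = ((2:ℝ)^(d:ℕ))^2 := by
          push_cast
          rw [show (4:ℝ) = 2^2 by norm_num, ← pow_mul, ← pow_mul, Nat.mul_comm]
    calc Real.sqrt d ≤ Real.sqrt (((2:ℝ)^(d:ℕ))^2) := Real.sqrt_le_sqrt h1
    _ = (2:ℝ)^(d:ℕ) := Real.sqrt_sq (by positivity)
  -- powers of two
  have hWm2 : Wm = (2:ℝ)^(Ebits d (2*j₀+1)) := by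
    rw [hWmdef, W_Mb_pow]; push_cast; ring
  have hQm2 : Qm = (2:ℝ)^((Fq d j₀ + beta d j₀ : ℕ)) := by
    rw [hQmdef, W_Bd_pow]
    have hFs : Fq d (j₀+1) = Fq d j₀ + beta d j₀ := by
      unfold Fq; rw [Finset.sum_range_succ]
    rw [hFs]; push_cast; ring
  have hB2 : B = (2:ℝ)^(beta d j₀) := by
    rw [hBdef]; unfold Bd; push_cast; ring
  -- rpow facts
  have hWα : (0:ℝ) < Wm ^ α := Real.rpow_pos_of_pos hWmpos α
  have hδα : (0:ℝ) < δr ^ α := Real.rpow_pos_of_pos hδrpos α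
  have hsplit : δr ^ α * δr ^ (1-α) = δr := by
    rw [← Real.rpow_add hδrpos]
    norm_num
  have hδup : δr^(1-α) ≤ B^(1-α) :=
    Real.rpow_le_rpow hδrpos.le hδrB (by linarith)
  -- exponent inequality, real version
  have hα' : α * ((n:ℝ)+1) = n := by rw [hα]; field_simp
  have hkeyR : (n:ℝ) * (Ebits d (2*j₀+1) : ℝ) + ((n:ℝ)+1) * (d:ℝ)
      ≤ ((n:ℝ)+1) * (cN d n : ℝ) + ((n:ℝ)+1) * (Fq d j₀ : ℝ) + (n:ℝ) * (beta d j₀ : ℝ) := by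
    exact_mod_cast key_ineq d n j₀
  have hexp2 : α*(Ebits d (2*j₀+1):ℝ) + (d:ℝ)
      ≤ (cN d n:ℝ) + (Fq d j₀:ℝ) + α*(beta d j₀:ℝ) := by
    have hmul : (α*(Ebits d (2*j₀+1):ℝ) + (d:ℝ)) * ((n:ℝ)+1)
        ≤ ((cN d n:ℝ) + (Fq d j₀:ℝ) + α*(beta d j₀:ℝ)) * ((n:ℝ)+1) := by
      have e1 : (α*(Ebits d (2*j₀+1):ℝ) + (d:ℝ)) * ((n:ℝ)+1)
          = (α*((n:ℝ)+1))*(Ebits d (2*j₀+1):ℝ) + ((n:ℝ)+1)*(d:ℝ) := by ring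
      have e2 : ((cN d n:ℝ) + (Fq d j₀:ℝ) + α*(beta d j₀:ℝ)) * ((n:ℝ)+1)
          = ((n:ℝ)+1)*(cN d n:ℝ) + ((n:ℝ)+1)*(Fq d j₀:ℝ) + (α*((n:ℝ)+1))*(beta d j₀:ℝ) := by
        ring
      rw [e1, e2, hα']
      exact hkeyR
    exact le_of_mul_le_mul_right hmul hden
  have hmain2 : (2:ℝ)^(d+1) * B^(1-α) * Wm^α ≤ (2:ℝ)^(cN d n + 1) * Qm := by
    have lB : B^(1-α) = (2:ℝ)^((beta d j₀ : ℝ)*(1-α)) := by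
      rw [hB2, ← Real.rpow_natCast 2 (beta d j₀),
        ← Real.rpow_mul (by norm_num : (0:ℝ) ≤ 2)]
    have lW : Wm^α = (2:ℝ)^((Ebits d (2*j₀+1) : ℝ)*α) := by
      rw [hWm2, ← Real.rpow_natCast 2 (Ebits d (2*j₀+1)),
        ← Real.rpow_mul (by norm_num : (0:ℝ) ≤ 2)]
    have l2 : ((2:ℝ)^(d+1) : ℝ) = (2:ℝ)^(((d+1:ℕ)):ℝ) := (Real.rpow_natCast 2 (d+1)).symm
    have l3 : ((2:ℝ)^(cN d n + 1) : ℝ) = (2:ℝ)^(((cN d n+1:ℕ)):ℝ) :=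
      (Real.rpow_natCast 2 _).symm
    have lQ : Qm = (2:ℝ)^(((Fq d j₀ + beta d j₀:ℕ)):ℝ) := by
      rw [hQm2, ← Real.rpow_natCast]
    rw [lB, lW, l2, l3, lQ, ← Real.rpow_add (by norm_num : (0:ℝ) < 2),
      ← Real.rpow_add (by norm_num : (0:ℝ) < 2), ← Real.rpow_add (by norm_num : (0:ℝ) < 2)]
    apply (Real.rpow_le_rpow_left_iff (by norm_num : (1:ℝ) < 2)).mpr
    push_cast
    ring_nf
    ring_nf at hexp2
    linarith [hexp2]
  have hred : Real.sqrt d * (δr+1) * Wm^α ≤ (2:ℝ)^(cN d n + 1) * δr^α * Qm := by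
    calc Real.sqrt d * (δr+1) * Wm^α
        ≤ (2:ℝ)^(d:ℕ) * (2*δr) * Wm^α := by
          apply mul_le_mul_of_nonneg_right _ hWα.le
          apply mul_le_mul hsqrtd (by linarith) (by positivity) (by positivity)
      _ = δr^α * δr^(1-α) * ((2:ℝ)^(d:ℕ) * 2) * Wm^α := by rw [hsplit]; ring
      _ ≤ δr^α * B^(1-α) * ((2:ℝ)^(d:ℕ) * 2) * Wm^α := by
          apply mul_le_mul_of_nonneg_right _ hWα.le
          apply mul_le_mul_of_nonneg_right _ (by positivity)
          exact mul_le_mul_of_nonneg_left hδup hδα.le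
      _ = δr^α * ((2:ℝ)^(d+1) * B^(1-α) * Wm^α) := by
          rw [pow_succ]; ring
      _ ≤ δr^α * ((2:ℝ)^(cN d n + 1) * Qm) := mul_le_mul_of_nonneg_left hmain2 hδα.le
      _ = (2:ℝ)^(cN d n + 1) * δr^α * Qm := by ring
  have h34 : (1/2:ℝ) ≤ (3/4:ℝ)^α := by
    have h := Real.rpow_le_rpow_of_exponent_ge (by norm_num : (0:ℝ) < 3/4)
      (by norm_num : (3/4:ℝ) ≤ 1) hα1
    rw [Real.rpow_one] at h
    linarith
  have hexpand : ((3/4) * (δr/Wm))^α = (3/4:ℝ)^α * (δr^α / Wm^α) := by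
    rw [Real.mul_rpow (by norm_num) (by positivity), Real.div_rpow hδrpos.le hWmpos.le]
  have hT : Real.sqrt d * (δr+1) * Wm^α ≤ (2:ℝ)^(cN d n + 2) * (3/4:ℝ)^α * δr^α * Qm := by
    have h2 : (2:ℝ)^(cN d n + 1) ≤ (2:ℝ)^(cN d n + 2) * (3/4:ℝ)^α := by
      have he : (2:ℝ)^(cN d n + 2) = (2:ℝ)^(cN d n + 1) * 2 := by rw [pow_succ]
      rw [he]
      nlinarith [pow_pos (by norm_num : (0:ℝ)<2) (cN d n + 1), h34]
    calc Real.sqrt d * (δr+1) * Wm^α ≤ (2:ℝ)^(cN d n + 1) * δr^α * Qm := hred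
    _ = (2:ℝ)^(cN d n + 1) * (δr^α * Qm) := by ring
    _ ≤ ((2:ℝ)^(cN d n + 2) * (3/4:ℝ)^α) * (δr^α * Qm) :=
        mul_le_mul_of_nonneg_right h2 (by positivity)
    _ = (2:ℝ)^(cN d n + 2) * (3/4:ℝ)^α * δr^α * Qm := by ring
  have hmain : Real.sqrt d * ((δr + 1)/Qm)
      ≤ (2:ℝ)^(cN d n + 2) * ((3/4) * (δr/Wm))^α := by
    rw [hexpand,
      show Real.sqrt d * ((δr + 1)/Qm) = (Real.sqrt d * (δr+1))/Qm from by ring,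
      div_le_iff₀ hQmpos,
      show (2:ℝ)^(cN d n + 2) * ((3/4:ℝ)^α * (δr^α/Wm^α)) * Qm
        = ((2:ℝ)^(cN d n + 2) * (3/4:ℝ)^α * δr^α * Qm)/Wm^α from by ring]
    rw [le_div_iff₀ hWα]
    exact hT
  -- conclusion
  have hLpos : (0:ℝ) ≤ (3/4) * (δr/Wm) := by positivity
  have hrpowL : ((3/4) * (δr/Wm))^α ≤ dist (Phi d x) (Phi d y)^α :=
    Real.rpow_le_rpow hLpos hlow hα0
  calc dist (Psi d x) (Psi d y) ≤ Real.sqrt d * ((δr + 1)/Qm) := hupp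
  _ ≤ (2:ℝ)^(cN d n + 2) * ((3/4) * (δr/Wm))^α := hmain
  _ ≤ (2:ℝ)^(cN d n + 2) * dist (Phi d x) (Phi d y)^α :=
      mul_le_mul_of_nonneg_left hrpowL (by positivity)

end Core
end Maga

set_option maxHeartbeats 1000000
open scoped NNReal ENNReal
namespace Maga
section Final
variable (d : ℕ)

instance instNonemptyX : Nonempty (X d) := ⟨fun j _ => ⟨0, Bd_pos d j⟩⟩

/-- the Hölder comparison map -/
noncomputable def fmap : EuclideanSpace ℝ (Fin d) → EuclideanSpace ℝ (Fin d) :=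
  fun z => Psi d (Function.invFun (Phi d) z)

lemma holderOnWith_fmap (hd : 0 < d) (n : ℕ) :
    HolderOnWith ((2:ℝ≥0)^(cN d n + 2)) ((n:ℝ≥0)/((n:ℝ≥0)+1)) (fmap d)
      (Set.range (Phi d)) := by
  intro za hza zb hzb
  obtain ⟨xa0, hxa0⟩ := hza
  obtain ⟨xb0, hxb0⟩ := hzb
  set x := Function.invFun (Phi d) za with hxdef
  set y := Function.invFun (Phi d) zb with hydef
  have hxa : Phi d x = za := Function.invFun_eq ⟨xa0, hxa0⟩
  have hyb : Phi d y = zb := Function.invFun_eq ⟨xb0, hxb0⟩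
  have core := holder_core d hd n x y
  rw [hxa, hyb] at core
  have hfa : fmap d za = Psi d x := rfl
  have hfb : fmap d zb = Psi d y := rfl
  rw [hfa, hfb]
  have hCcast : (((2:ℝ≥0)^(cN d n + 2) : ℝ≥0) : ℝ) = (2:ℝ)^(cN d n + 2) := by
    push_cast; ring
  have hrcast : ((((n:ℝ≥0)/((n:ℝ≥0)+1)) : ℝ≥0) : ℝ) = (n:ℝ)/((n:ℝ)+1) := by
    push_cast; ring
  rw [edist_dist, edist_dist]
  have h1 := ENNReal.ofReal_rpow_of_nonneg (x := dist za zb)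
      (p := (((n:ℝ≥0)/((n:ℝ≥0)+1) : ℝ≥0) : ℝ)) dist_nonneg
      ((n:ℝ≥0)/((n:ℝ≥0)+1)).coe_nonneg
  rw [h1]
  have h2 : ((((2:ℝ≥0)^(cN d n + 2)) : ℝ≥0) : ℝ≥0∞)
      = ENNReal.ofReal ((2:ℝ)^(cN d n + 2)) := by
    rw [← hCcast, ENNReal.ofReal_coe_nnreal]
  rw [h2, ← ENNReal.ofReal_mul (by positivity)]
  apply ENNReal.ofReal_le_ofReal
  rw [hrcast]
  exact core

/-- the unit cube -/
def cube : Set (EuclideanSpace ℝ (Fin d)) := {z | ∀ i, z i ∈ Set.Icc (0:ℝ) 1}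

lemma cube_subset (hd : 0 < d) : cube d ⊆ fmap d '' (Set.range (Phi d)) := by
  intro z hz
  have hex : ∀ i : Fin d, ∃ a : ℕ → ℕ, (∀ k, a k ≤ Bd d k - 1) ∧ S (Bd d) a = z i :=
    fun i => exists_digits (Bd d) (Bd_ge d) (z i) (hz i)
  choose a ha hS using hex
  set x : X d := fun j i => (⟨a i j, by have := ha i j; have := Bd_pos d j; omega⟩ : Fin (Bd d j))
    with hxdef
  refine ⟨Phi d x, Set.mem_range_self x, ?_⟩
  have hinv : Function.invFun (Phi d) (Phi d x) = x :=
    (Function.leftInverse_invFun (Phi_inj d)) x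
  show Psi d (Function.invFun (Phi d) (Phi d x)) = z
  rw [hinv]
  ext i
  rw [Psi_apply]
  have : (fun j => ((x j i : ℕ))) = a i := by
    funext j
    simp [hxdef]
  rw [this]
  exact hS i

lemma cube_mem_nhds :
    cube d ∈ nhds ((EuclideanSpace.equiv (Fin d) ℝ).symm (fun _ => (1/2:ℝ))) := by
  rw [Metric.mem_nhds_iff]
  refine ⟨1/2, by norm_num, ?_⟩
  intro z hz
  rw [Metric.mem_ball] at hz
  intro i
  have hcoord := coord_dist_le z ((EuclideanSpace.equiv (Fin d) ℝ).symm (fun _ => (1/2:ℝ))) i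
  have hcenter : ((EuclideanSpace.equiv (Fin d) ℝ).symm (fun _ => (1/2:ℝ))) i = (1/2:ℝ) := rfl
  rw [hcenter, Real.dist_eq] at hcoord
  have habs : |z i - 1/2| < 1/2 := lt_of_le_of_lt hcoord hz
  rw [abs_lt] at habs
  constructor <;> [linarith; linarith]

lemma dimH_cube : dimH (cube d) = (d : ℝ≥0∞) := by
  rw [Real.dimH_of_mem_nhds (cube_mem_nhds d)]
  rw [finrank_euclideanSpace_fin]

lemma dimH_range_le_d :
    dimH (Set.range (Phi d)) ≤ (d : ℝ≥0∞) := by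
  calc dimH (Set.range (Phi d))
      ≤ dimH (Set.univ : Set (EuclideanSpace ℝ (Fin d))) := dimH_mono (Set.subset_univ _)
  _ = (d : ℝ≥0∞) := by rw [Real.dimH_univ_eq_finrank, finrank_euclideanSpace_fin]

theorem dimH_range_eq (hd : 0 < d) : dimH (Set.range (Phi d)) = (d : ℝ≥0∞) := by
  apply le_antisymm (dimH_range_le_d d)
  by_contra hlt
  push_neg at hlt
  set s := dimH (Set.range (Phi d)) with hsdef
  have hs_top : s ≠ ⊤ := by
    intro h
    rw [h] at hlt
    exact absurd hlt (by simp)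
  have hd0 : (0:ℝ) < (d:ℝ) := by exact_mod_cast hd
  have hsr : s.toReal < (d:ℝ) := by
    have h1 : s < ((d:ℕ) : ℝ≥0∞) := hlt
    have h2 := (ENNReal.toReal_lt_toReal hs_top (by simp : ((d:ℕ) : ℝ≥0∞) ≠ ⊤)).mpr h1
    rwa [ENNReal.toReal_natCast] at h2
  set ε : ℝ := (d:ℝ) - s.toReal with hε
  have hεpos : 0 < ε := by rw [hε]; linarith
  obtain ⟨n, hn⟩ := exists_nat_gt ((d:ℝ)/ε)
  have hn1 : 1 ≤ n := by
    have hp : 0 < (d:ℝ)/ε := by positivity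
    by_contra h
    push_neg at h
    have hn0 : n = 0 := by omega
    subst hn0
    norm_num at hn
    linarith
  have hkey : s.toReal < ((n:ℝ)/((n:ℝ)+1)) * d := by
    have hnn : (0:ℝ) < (n:ℝ)+1 := by positivity
    have h1 : (d:ℝ)/((n:ℝ)+1) < ε := by
      rw [div_lt_iff₀ hnn]
      have h2 : (d:ℝ)/ε < (n:ℝ) + 1 := by linarith
      have h3 := (div_lt_iff₀ hεpos).mp h2
      linarith [h3]
    have heq : ((n:ℝ)/((n:ℝ)+1)) * d = d - d/((n:ℝ)+1) := by
      field_simp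
      ring
    rw [heq]
    rw [hε] at h1
    linarith
  have hH := holderOnWith_fmap d hd n
  have hrne : ((n:ℝ≥0)/((n:ℝ≥0)+1)) ≠ 0 := by
    apply div_ne_zero
    · have : (n:ℝ≥0) ≠ 0 := by
        exact_mod_cast Nat.one_le_iff_ne_zero.mp hn1
      exact this
    · intro h
      have : ((n:ℝ≥0)+1 : ℝ≥0) ≠ 0 := by positivity
      exact this h
  have hr0 : 0 < ((n:ℝ≥0)/((n:ℝ≥0)+1)) := pos_iff_ne_zero.mpr hrne
  have him := hH.dimH_image_le hr0
  have hcube : (d:ℝ≥0∞) ≤ dimH (fmap d '' (Set.range (Phi d))) := by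
    rw [← dimH_cube d]
    exact dimH_mono (cube_subset d hd)
  have hds : (d:ℝ≥0∞) ≤ s / (((n:ℝ≥0)/((n:ℝ≥0)+1) : ℝ≥0) : ℝ≥0∞) := le_trans hcube him
  have hrd : ((d:ℕ):ℝ≥0∞) * (((n:ℝ≥0)/((n:ℝ≥0)+1) : ℝ≥0) : ℝ≥0∞) ≤ s :=
    (ENNReal.le_div_iff_mul_le
      (Or.inl (ENNReal.coe_ne_zero.mpr hrne)) (Or.inl ENNReal.coe_ne_top)).mp hds
  have htoReal := ENNReal.toReal_mono hs_top hrd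
  rw [ENNReal.toReal_mul, ENNReal.toReal_natCast, ENNReal.coe_toReal] at htoReal
  have hcast : (((n:ℝ≥0)/((n:ℝ≥0)+1) : ℝ≥0) : ℝ) = (n:ℝ)/((n:ℝ)+1) := by
    push_cast; ring
  rw [hcast] at htoReal
  nlinarith [htoReal, hkey]

end Final
end Maga

open MeasureTheory Set
open scoped ENNReal

/-- Maga. For every `d ≥ 2` there is a compact set `A ⊆ ℝ^d` of full
Hausdorff dimension `d` containing no four pairwise distinct points `a, b, c, e` with
`a + c = b + e` (the vertices of a parallelogram). -/
theorem exists_full_dimensional_set_without_parallelograms (d : ℕ) (hd : 2 ≤ d) :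
    ∃ A : Set (EuclideanSpace ℝ (Fin d)), IsCompact A ∧ dimH A = (d : ℝ≥0∞) ∧
      ¬ ∃ a b c e : EuclideanSpace ℝ (Fin d),
        a ∈ A ∧ b ∈ A ∧ c ∈ A ∧ e ∈ A ∧
        a ≠ b ∧ a ≠ c ∧ a ≠ e ∧ b ≠ c ∧ b ≠ e ∧ c ≠ e ∧
        a + c = b + e := by
  have hd0 : 0 < d := by omega
  refine ⟨Set.range (Maga.Phi d), ?_, Maga.dimH_range_eq d hd0, ?_⟩
  · exact isCompact_range (Maga.continuous_Phi d)
  · rintro ⟨a, b, c, e, ⟨xa, rfl⟩, ⟨xb, rfl⟩, ⟨xc, rfl⟩, ⟨xe, rfl⟩,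
      hab, hac, hae, hbc, hbe, hce, heq⟩
    exact Maga.no_parallelogram d hd0 xa xb xc xe heq hab hae
end

section
/- Let μ be a compactly supported Borel probability measure on ℝ^d such that μ(B(x,r)) ≤ C r^s for all x ∈ ℝ^d and r > 0, where 0 < s ≤ d. Then there exists a constant C′ (depending only on d, s and C) such that for every R ≥ 1, ∫_{|ξ| ≤ R} |μ̂(ξ)|² dξ ≤ C′ R^{d−s}. -/
open MeasureTheory Set Metric
open scoped ENNReal RealInnerProductSpace
open Real Complex FourierTransform

variable {d : ℕ}

/-- The Fourier transform `μ̂(ξ) = ∫ e^{-2πi x·ξ} dμ(x)` of a measure on `ℝ^d`. -/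
noncomputable def fourierMeasure {d : ℕ} (μ : Measure (EuclideanSpace ℝ (Fin d)))
    (ξ : EuclideanSpace ℝ (Fin d)) : ℂ :=
  ∫ x, Complex.exp (-(2 * Real.pi * ⟪x, ξ⟫) * Complex.I) ∂μ

lemma rpow_le_exp_half {p u : ℝ} (hp : 0 < p) (hu : 0 ≤ u) :
    u ^ p ≤ (2 * p) ^ p * Real.exp (u / 2) := by
  have h2p : (0:ℝ) < 2 * p := by linarith
  have hv : 0 ≤ u / (2 * p) := by positivity
  have h1 : u ^ p = (2 * p) ^ p * (u / (2 * p)) ^ p := by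
    rw [← Real.mul_rpow (le_of_lt h2p) hv]
    field_simp
  rw [h1]
  gcongr
  calc (u / (2 * p)) ^ p ≤ (Real.exp (u / (2 * p))) ^ p := by
        gcongr
        · linarith [Real.add_one_le_exp (u / (2 * p))]
    _ = Real.exp (u / 2) := by
        rw [← Real.exp_one_rpow (u / (2*p)), ← Real.rpow_mul (le_of_lt (Real.exp_pos 1)),
          Real.exp_one_rpow]
        congr 1
        field_simp

lemma lintegral_rpow_neg_half :
    ∫⁻ t in Ioc (0:ℝ) 1, ENNReal.ofReal (t ^ (-(1/2) : ℝ)) = ENNReal.ofReal 2 := by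
  have hint : IntervalIntegrable (fun t : ℝ => t ^ (-(1/2):ℝ)) volume 0 1 :=
    intervalIntegral.intervalIntegrable_rpow' (by norm_num)
  have hint' : IntegrableOn (fun t : ℝ => t ^ (-(1/2):ℝ)) (Ioc 0 1) volume := by
    rwa [intervalIntegrable_iff_integrableOn_Ioc_of_le (by norm_num)] at hint
  rw [← ofReal_integral_eq_lintegral_ofReal hint'
    (ae_restrict_of_forall_mem measurableSet_Ioc fun t ht => Real.rpow_nonneg (le_of_lt ht.1) _)]
  congr 1
  rw [← intervalIntegral.integral_of_le (by norm_num : (0:ℝ) ≤ 1),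
    integral_rpow (Or.inl (by norm_num))]
  norm_num


lemma frostman_gauss (μ : Measure (EuclideanSpace ℝ (Fin d))) [IsProbabilityMeasure μ]
    {C s : ℝ} (hC : 0 < C) (hs₀ : 0 < s)
    (hball : ∀ (x : EuclideanSpace ℝ (Fin d)) (r : ℝ), 0 < r →
      μ (closedBall x r) ≤ ENNReal.ofReal (C * r ^ s))
    (x : EuclideanSpace ℝ (Fin d)) {R : ℝ} (hR : 0 < R) :
    ∫⁻ y, ENNReal.ofReal (Real.exp (-(π * R^2) * ‖x - y‖^2)) ∂μ
      ≤ ENNReal.ofReal ((2 * C * s ^ (s/2) / π ^ (s/2)) * R ^ (-s)) := by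
  set f : EuclideanSpace ℝ (Fin d) → ℝ := fun y => Real.exp (-(π * R^2) * ‖x - y‖^2) with hf
  have hfc : Continuous f := by fun_prop
  have hπR : (0:ℝ) < π * R^2 := by positivity
  set K : ℝ := C * s ^ (s/2) / (π ^ (s/2) * R ^ s) with hK
  have hK0 : 0 ≤ K := by positivity
  rw [lintegral_eq_lintegral_meas_lt μ (ae_of_all μ fun y => (Real.exp_pos _).le)
    hfc.aemeasurable]
  have key : ∀ t ∈ Ioi (0:ℝ), μ {y | t < f y}
      ≤ (Ioc (0:ℝ) 1).indicator (fun t => ENNReal.ofReal (K * t ^ (-(1/2) : ℝ))) t := by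
    intro t ht
    simp only [mem_Ioi] at ht
    by_cases ht1 : t < 1
    swap
    · push_neg at ht1
      have : {y | t < f y} = ∅ := by
        ext y
        simp only [mem_setOf_eq, mem_empty_iff_false, iff_false, not_lt]
        calc f y ≤ 1 := Real.exp_le_one_iff.mpr (by nlinarith [sq_nonneg ‖x - y‖])
          _ ≤ t := ht1
      rw [this, measure_empty]
      exact zero_le
    · have htmem : t ∈ Ioc (0:ℝ) 1 := ⟨ht, le_of_lt ht1⟩
      rw [indicator_of_mem htmem]
      set u : ℝ := -Real.log t with hu
      have hu0 : 0 < u := by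
        simp only [hu, neg_pos]
        exact Real.log_neg ht ht1
      set r : ℝ := Real.sqrt (u / (π * R^2)) with hr
      have hr0 : 0 < r := Real.sqrt_pos.mpr (by positivity)
      have hsub : {y | t < f y} ⊆ closedBall x r := by
        intro y hy
        simp only [mem_setOf_eq, hf] at hy
        have h1 : Real.log t < -(π * R^2) * ‖x - y‖^2 :=
          (Real.log_lt_iff_lt_exp ht).mpr hy
        have h2 : ‖x - y‖^2 ≤ u / (π * R^2) := by
          rw [le_div_iff₀ hπR]
          nlinarith
        have h3 : ‖x - y‖ ≤ r := by
          rw [hr, ← Real.sqrt_sq (norm_nonneg (x - y))]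
          exact Real.sqrt_le_sqrt h2
        simp only [mem_closedBall, dist_eq_norm, ← norm_sub_rev x y]
        exact h3
      have hrs : r ^ s = u ^ (s/2) / (π ^ (s/2) * R ^ s) := by
        rw [hr, Real.sqrt_eq_rpow, ← Real.rpow_mul (by positivity : (0:ℝ) ≤ u / (π * R^2))]
        rw [show (1/2) * s = s/2 by ring,
          Real.div_rpow (le_of_lt hu0) (le_of_lt hπR),
          Real.mul_rpow (le_of_lt Real.pi_pos) (sq_nonneg R)]
        congr 2
        rw [← Real.rpow_natCast R 2, ← Real.rpow_mul (le_of_lt hR)]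
        norm_num
        rw [show (2:ℝ) * (s/2) = s by ring]
      have hus : u ^ (s/2) ≤ s ^ (s/2) * t ^ (-(1/2) : ℝ) := by
        have := rpow_le_exp_half (p := s/2) (by positivity) (le_of_lt hu0)
        rw [show 2 * (s/2) = s by ring] at this
        have hexp : Real.exp (u / 2) = t ^ (-(1/2) : ℝ) := by
          rw [Real.rpow_def_of_pos ht]
          congr 1
          rw [hu]
          ring
        rw [hexp] at this
        exact this
      calc μ {y | t < f y} ≤ μ (closedBall x r) := measure_mono hsub
        _ ≤ ENNReal.ofReal (C * r ^ s) := hball x r hr0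
        _ ≤ ENNReal.ofReal (K * t ^ (-(1/2) : ℝ)) := by
          apply ENNReal.ofReal_le_ofReal
          rw [hrs, hK]
          calc C * (u ^ (s/2) / (π ^ (s/2) * R ^ s))
              = C * u ^ (s/2) / (π ^ (s/2) * R ^ s) := by ring
            _ ≤ C * (s ^ (s/2) * t ^ (-(1/2):ℝ)) / (π ^ (s/2) * R ^ s) := by
                gcongr
            _ = C * s ^ (s/2) / (π ^ (s/2) * R ^ s) * t ^ (-(1/2):ℝ) := by ring
  calc ∫⁻ t in Ioi (0:ℝ), μ {y | t < f y}
      ≤ ∫⁻ t in Ioi (0:ℝ),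
          (Ioc (0:ℝ) 1).indicator (fun t => ENNReal.ofReal (K * t ^ (-(1/2) : ℝ))) t :=
        lintegral_mono_ae (ae_restrict_of_forall_mem measurableSet_Ioi key)
    _ = ∫⁻ t in Ioc (0:ℝ) 1, ENNReal.ofReal (K * t ^ (-(1/2) : ℝ)) := by
        rw [lintegral_indicator measurableSet_Ioc, Measure.restrict_restrict measurableSet_Ioc,
          inter_eq_self_of_subset_left Ioc_subset_Ioi_self]
    _ = ENNReal.ofReal K * ∫⁻ t in Ioc (0:ℝ) 1, ENNReal.ofReal (t ^ (-(1/2) : ℝ)) := by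
        rw [← lintegral_const_mul _ (by fun_prop)]
        congr 1 with t
        rw [ENNReal.ofReal_mul hK0]
    _ = ENNReal.ofReal K * ENNReal.ofReal 2 := by rw [lintegral_rpow_neg_half]
    _ ≤ ENNReal.ofReal ((2 * C * s ^ (s/2) / π ^ (s/2)) * R ^ (-s)) := by
        rw [← ENNReal.ofReal_mul hK0]
        apply ENNReal.ofReal_le_ofReal
        apply le_of_eq
        rw [hK, Real.rpow_neg (le_of_lt hR)]
        field_simp

lemma gauss_fourier (w : EuclideanSpace ℝ (Fin d)) {R : ℝ} (hR : 0 < R) :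
    ∫ ξ : EuclideanSpace ℝ (Fin d),
      Complex.exp (-(2 * π * ⟪w, ξ⟫) * Complex.I) * Complex.exp (-(π / R^2 : ℝ) * ‖ξ‖^2)
      = (R:ℂ)^d * Complex.exp (-(π * R^2 * ‖w‖^2 : ℝ)) := by
  have hb : (0:ℝ) < π / R^2 := by positivity
  have hπ : (π:ℂ) ≠ 0 := Complex.ofReal_ne_zero.mpr Real.pi_ne_zero
  have h := fourier_gaussian_innerProductSpace
    (b := ((π / R^2 : ℝ) : ℂ)) (by rw [Complex.ofReal_re] at *; exact hb) (V := EuclideanSpace ℝ (Fin d)) w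
  rw [Real.fourier_eq'] at h
  simp only [smul_eq_mul] at h
  have hlhs : ∫ ξ : EuclideanSpace ℝ (Fin d),
      Complex.exp (-(2 * π * ⟪w, ξ⟫) * Complex.I) * Complex.exp (-(π / R^2 : ℝ) * ‖ξ‖^2)
      = ∫ v : EuclideanSpace ℝ (Fin d),
        Complex.exp ((↑(-2 * π * ⟪v, w⟫) * Complex.I)) * Complex.exp (-(π / R^2 : ℝ) * ‖v‖^2) := by
    congr 1 with ξ
    rw [real_inner_comm w ξ]
    push_cast
    ring_nf
  rw [hlhs, h]
  have hd : (Module.finrank ℝ (EuclideanSpace ℝ (Fin d)) : ℂ) = (d : ℂ) := by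
    norm_cast
    simp [finrank_euclideanSpace]
  congr 1
  · rw [show ((π:ℂ) / ((π / R^2 : ℝ) : ℂ)) = ((R^2 : ℝ) : ℂ) by
      push_cast; field_simp [hπ]]
    rw [show ((Module.finrank ℝ (EuclideanSpace ℝ (Fin d)) : ℂ) / 2) = ((d/2 : ℝ) : ℂ) by
      rw [hd]; push_cast; ring]
    rw [← Complex.ofReal_cpow (by positivity)]
    rw [show ((R^2 : ℝ) ^ ((d/2 : ℝ)) : ℝ) = R ^ d by
      rw [← Real.rpow_natCast R 2, ← Real.rpow_mul (le_of_lt hR), ← Real.rpow_natCast R d]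
      congr 1
      ring]
    push_cast
    ring
  · congr 1
    push_cast
    field_simp [hπ]

lemma integrable_gauss_real {b : ℝ} (hb : 0 < b) :
    Integrable (fun v : EuclideanSpace ℝ (Fin d) => Real.exp (-b * ‖v‖^2)) := by
  have h := GaussianFourier.integrable_cexp_neg_mul_sq_norm_add
    (b := (b:ℂ)) (by simpa using hb) 0 (0 : EuclideanSpace ℝ (Fin d))
  have h2 := h.norm
  apply h2.congr
  filter_upwards with v
  simp [Complex.norm_exp]
  norm_cast
  exact Or.inl rfl

lemma plancherel_gauss (μ : Measure (EuclideanSpace ℝ (Fin d))) [IsProbabilityMeasure μ]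
    {R : ℝ} (hR : 0 < R) :
    ∫ ξ : EuclideanSpace ℝ (Fin d),
        ‖fourierMeasure μ ξ‖^2 * Real.exp (-(π / R^2) * ‖ξ‖^2)
      = ∫ z : EuclideanSpace ℝ (Fin d) × EuclideanSpace ℝ (Fin d),
          (R:ℝ)^d * Real.exp (-(π * R^2) * ‖z.1 - z.2‖^2) ∂(μ.prod μ) := by
  set V := EuclideanSpace ℝ (Fin d)
  set P : Measure (V × V) := μ.prod μ with hP
  set b : ℝ := π / R^2 with hbdef
  have hb : 0 < b := by positivity
  set e : V → V → ℂ := fun x ξ => Complex.exp (-(2 * π * ⟪x, ξ⟫) * Complex.I) with he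
  set F : V × V → V → ℂ := fun z ξ => Complex.exp (-(2 * π * ⟪z.1 - z.2, ξ⟫) * Complex.I)
      * Complex.exp (-(b : ℝ) * ‖ξ‖^2) with hF
  -- Step A: pointwise identity
  have stepA : ∀ ξ : V, ((‖fourierMeasure μ ξ‖^2 * Real.exp (-b * ‖ξ‖^2) : ℝ) : ℂ)
      = ∫ z : V × V, F z ξ ∂P := by
    intro ξ
    have hconj : (starRingEnd ℂ) (fourierMeasure μ ξ) = ∫ y, (starRingEnd ℂ) (e y ξ) ∂μ := by
      rw [fourierMeasure, ← integral_conj]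
    have hmc : fourierMeasure μ ξ * (starRingEnd ℂ) (fourierMeasure μ ξ)
        = ∫ z : V × V, e z.1 ξ * (starRingEnd ℂ) (e z.2 ξ) ∂P := by
      rw [hconj, fourierMeasure, hP, ← integral_prod_mul]
    have hptw : ∀ z : V × V, (e z.1 ξ * (starRingEnd ℂ) (e z.2 ξ))
          * Complex.exp (-(b : ℝ) * ‖ξ‖^2) = F z ξ := by
      intro z
      rw [hF, he]
      simp only
      rw [← Complex.exp_conj]
      rw [← Complex.exp_add]
      congr 2
      · simp only [map_mul, map_neg, Complex.conj_I, Complex.conj_ofReal, map_ofNat]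
        rw [inner_sub_left]
        push_cast
        ring
    have : ((‖fourierMeasure μ ξ‖^2 : ℝ) : ℂ)
        = fourierMeasure μ ξ * (starRingEnd ℂ) (fourierMeasure μ ξ) := by
      rw [Complex.mul_conj, Complex.normSq_eq_norm_sq]
    calc ((‖fourierMeasure μ ξ‖^2 * Real.exp (-b * ‖ξ‖^2) : ℝ) : ℂ)
        = ((‖fourierMeasure μ ξ‖^2 : ℝ) : ℂ) * Complex.exp (-(b:ℝ) * ‖ξ‖^2) := by
          push_cast [Complex.ofReal_exp]
          ring_nf
      _ = (∫ z : V × V, e z.1 ξ * (starRingEnd ℂ) (e z.2 ξ) ∂P) * Complex.exp (-(b:ℝ) * ‖ξ‖^2) := by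
          rw [this, hmc]
      _ = ∫ z : V × V, (e z.1 ξ * (starRingEnd ℂ) (e z.2 ξ)) * Complex.exp (-(b:ℝ) * ‖ξ‖^2) ∂P := by
          exact (integral_smul_const
            (fun z : V × V => e z.1 ξ * (starRingEnd ℂ) (e z.2 ξ))
            (Complex.exp (-(b:ℝ) * ‖ξ‖^2))).symm
      _ = ∫ z : V × V, F z ξ ∂P := by
          congr 1 with z
          exact hptw z
  have hinner : Continuous fun p : V × (V × V) => (⟪p.2.1 - p.2.2, p.1⟫ : ℝ) :=
    Continuous.inner ((continuous_fst.comp continuous_snd).sub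
      (continuous_snd.comp continuous_snd)) continuous_fst
  have hFc : Continuous (fun p : V × (V × V) => F p.2 p.1) := by
    simp only [hF]
    refine (Complex.continuous_exp.comp ?_).mul (Complex.continuous_exp.comp ?_)
    · exact ((continuous_const.mul (Complex.continuous_ofReal.comp hinner)).neg).mul
        continuous_const
    · exact continuous_const.mul
        ((Complex.continuous_ofReal.comp (continuous_norm.comp continuous_fst)).pow 2)
  have hFint : Integrable (fun p : V × (V × V) => F p.2 p.1) (volume.prod P) := by
    apply Integrable.mono' (g := fun p : V × (V × V) => Real.exp (-b * ‖p.1‖^2) * 1)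
      (((integrable_gauss_real hb).mul_prod (integrable_const 1)))
      hFc.aestronglyMeasurable
    filter_upwards with p
    simp only [hF, mul_one, norm_mul, Complex.norm_exp]
    have h1 : ((-(2 * (π:ℂ) * ((⟪p.2.1 - p.2.2, p.1⟫ : ℝ) : ℂ)) * Complex.I)).re = 0 := by
      simp
    rw [h1, Real.exp_zero, one_mul]
    apply le_of_eq
    congr 1
    rw [show (-(b:ℂ) * ((‖p.1‖ : ℂ))^2) = ((-b * ‖p.1‖^2 : ℝ) : ℂ) by push_cast; ring]
    rw [Complex.ofReal_re]
  have hA : ∀ ξ : V, ((‖fourierMeasure μ ξ‖^2 * Real.exp (-b * ‖ξ‖^2) : ℝ) : ℂ)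
      = ∫ z : V × V, F z ξ ∂P := stepA
  apply Complex.ofReal_inj.mp
  calc ((∫ ξ : V, ‖fourierMeasure μ ξ‖^2 * Real.exp (-b * ‖ξ‖^2) : ℝ) : ℂ)
      = ∫ ξ : V, ((‖fourierMeasure μ ξ‖^2 * Real.exp (-b * ‖ξ‖^2) : ℝ) : ℂ) :=
        integral_ofReal.symm
    _ = ∫ ξ : V, (∫ z : V × V, F z ξ ∂P) := by
        congr 1 with ξ
        exact hA ξ
    _ = ∫ z : V × V, (∫ ξ : V, F z ξ) ∂P := integral_integral_swap hFint
    _ = ∫ z : V × V, (((R:ℝ)^d * Real.exp (-(π * R^2) * ‖z.1 - z.2‖^2) : ℝ) : ℂ) ∂P := by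
        congr 1 with z
        have hg := gauss_fourier (z.1 - z.2) hR
        simp only [hF, hbdef]
        rw [hg]
        push_cast [Complex.ofReal_exp]
        ring_nf
    _ = (((∫ z : V × V, (R:ℝ)^d * Real.exp (-(π * R^2) * ‖z.1 - z.2‖^2) ∂P) : ℝ) : ℂ) :=
        integral_ofReal

lemma fourierMeasure_meas (μ : Measure (EuclideanSpace ℝ (Fin d))) [IsProbabilityMeasure μ] :
    AEStronglyMeasurable (fourierMeasure μ) (volume : Measure (EuclideanSpace ℝ (Fin d))) := by
  have hc : Continuous fun p : EuclideanSpace ℝ (Fin d) × EuclideanSpace ℝ (Fin d) =>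
      Complex.exp (-(2 * Real.pi * ⟪p.2, p.1⟫) * Complex.I) := by
    have hinner : Continuous fun p : EuclideanSpace ℝ (Fin d) × EuclideanSpace ℝ (Fin d) =>
        (⟪p.2, p.1⟫ : ℝ) := Continuous.inner continuous_snd continuous_fst
    exact Complex.continuous_exp.comp
      (((continuous_const.mul (Complex.continuous_ofReal.comp hinner)).neg).mul continuous_const)
  exact (StronglyMeasurable.integral_prod_right' (hc.stronglyMeasurable)).aestronglyMeasurable

lemma fourierMeasure_norm_le (μ : Measure (EuclideanSpace ℝ (Fin d))) [IsProbabilityMeasure μ]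
    (ξ : EuclideanSpace ℝ (Fin d)) : ‖fourierMeasure μ ξ‖ ≤ 1 := by
  rw [fourierMeasure]
  calc ‖∫ x, Complex.exp (-(2 * Real.pi * ⟪x, ξ⟫) * Complex.I) ∂μ‖
      ≤ ∫ x, ‖Complex.exp (-(2 * Real.pi * ⟪x, ξ⟫) * Complex.I)‖ ∂μ :=
        norm_integral_le_integral_norm _
    _ = ∫ (_ : EuclideanSpace ℝ (Fin d)), (1:ℝ) ∂μ := by
        congr 1 with x
        simp only [Complex.norm_exp]
        have : ((-(2 * (Real.pi:ℂ) * ((⟪x, ξ⟫ : ℝ) : ℂ)) * Complex.I)).re = 0 := by simp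
        rw [this, Real.exp_zero]
    _ = 1 := by simp


/-- Let `μ` be a compactly supported Borel probability measure on `ℝ^d`
with `μ(B(x,r)) ≤ C r^s`, `0 < s ≤ d`. Then there is a constant `C'` such that for every
`R ≥ 1`, `∫_{|ξ| ≤ R} |μ̂(ξ)|² dξ ≤ C' R^{d-s}`. -/
theorem energy_ball_fourier_bound
    (d : ℕ) (hd : 1 ≤ d)
    (μ : Measure (EuclideanSpace ℝ (Fin d))) [IsProbabilityMeasure μ]
    (hμc : ∃ K : Set (EuclideanSpace ℝ (Fin d)), IsCompact K ∧ μ Kᶜ = 0)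
    (C s : ℝ) (hC : 0 < C) (hs₀ : 0 < s) (hsd : s ≤ d)
    (hball : ∀ (x : EuclideanSpace ℝ (Fin d)) (r : ℝ), 0 < r →
      μ (closedBall x r) ≤ ENNReal.ofReal (C * r ^ s)) :
    ∃ C' : ℝ, 0 < C' ∧ ∀ R : ℝ, 1 ≤ R →
      ∫⁻ ξ in closedBall (0 : EuclideanSpace ℝ (Fin d)) R, ‖fourierMeasure μ ξ‖₊ ^ 2 ∂volume
        ≤ ENNReal.ofReal (C' * R ^ ((d : ℝ) - s)) := by
  have hπ := Real.pi_pos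
  set A : ℝ := 2 * C * s ^ (s/2) / Real.pi ^ (s/2) with hA
  have hA0 : 0 < A := by positivity
  refine ⟨Real.exp Real.pi * A, by positivity, ?_⟩
  intro R hR
  have hR0 : 0 < R := lt_of_lt_of_le one_pos hR
  set b : ℝ := Real.pi / R^2 with hbdef
  have hb : 0 < b := by positivity
  set g : EuclideanSpace ℝ (Fin d) → ℝ :=
    fun ξ => ‖fourierMeasure μ ξ‖^2 * Real.exp (-b * ‖ξ‖^2) with hg
  have hgnn : ∀ ξ, 0 ≤ g ξ := fun ξ => by positivity
  have hgcont_exp : Integrable (fun v : EuclideanSpace ℝ (Fin d) => Real.exp (-b * ‖v‖^2)) :=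
    integrable_gauss_real hb
  have hgmeas : AEStronglyMeasurable g (volume : Measure (EuclideanSpace ℝ (Fin d))) := by
    apply AEMeasurable.aestronglyMeasurable
    exact (((fourierMeasure_meas μ).norm.aemeasurable.pow_const 2).mul
      (Continuous.aemeasurable (by fun_prop)))
  have hgint : Integrable g := by
    apply Integrable.mono' hgcont_exp hgmeas
    filter_upwards with ξ
    rw [Real.norm_eq_abs, _root_.abs_of_nonneg (hgnn ξ)]
    have h1 : ‖fourierMeasure μ ξ‖^2 ≤ 1 := by
      have := fourierMeasure_norm_le μ ξ
      nlinarith [norm_nonneg (fourierMeasure μ ξ)]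
    have h2 : 0 < Real.exp (-b * ‖ξ‖^2) := Real.exp_pos _
    simp only [hg]
    nlinarith [mul_le_mul_of_nonneg_right h1 h2.le]
  have hprodint : Integrable
      (fun z : EuclideanSpace ℝ (Fin d) × EuclideanSpace ℝ (Fin d) =>
        (R:ℝ)^d * Real.exp (-(Real.pi * R^2) * ‖z.1 - z.2‖^2)) (μ.prod μ) := by
    apply Integrable.mono' (integrable_const ((R:ℝ)^d))
    · exact Continuous.aestronglyMeasurable (by fun_prop)
    · filter_upwards with z
      rw [Real.norm_eq_abs, _root_.abs_of_nonneg (by positivity)]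
      have h1 : Real.exp (-(Real.pi * R^2) * ‖z.1 - z.2‖^2) ≤ 1 :=
        Real.exp_le_one_iff.mpr (by
          nlinarith [mul_nonneg (mul_nonneg Real.pi_pos.le (sq_nonneg R))
            (sq_nonneg ‖z.1 - z.2‖)])
      nlinarith [pow_pos hR0 d]
  have hprodnn : 0 ≤ᵐ[μ.prod μ]
      (fun z : EuclideanSpace ℝ (Fin d) × EuclideanSpace ℝ (Fin d) =>
        (R:ℝ)^d * Real.exp (-(Real.pi * R^2) * ‖z.1 - z.2‖^2)) :=
    ae_of_all _ fun z => by positivity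
  calc ∫⁻ ξ in closedBall (0 : EuclideanSpace ℝ (Fin d)) R, ‖fourierMeasure μ ξ‖₊ ^ 2 ∂volume
      ≤ ∫⁻ ξ in closedBall (0 : EuclideanSpace ℝ (Fin d)) R,
          ENNReal.ofReal (Real.exp Real.pi) * ENNReal.ofReal (g ξ) ∂volume := by
        apply lintegral_mono_ae
        apply ae_restrict_of_forall_mem measurableSet_closedBall
        intro ξ hξ
        have hξR : ‖ξ‖ ≤ R := by rwa [mem_closedBall_zero_iff] at hξ
        have hξ2 : ‖ξ‖^2 ≤ R^2 := by nlinarith [norm_nonneg ξ]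
        have h1 : b * ‖ξ‖^2 ≤ Real.pi := by
          rw [hbdef, div_mul_eq_mul_div, div_le_iff₀ (by positivity)]
          nlinarith
        have h2 : (1:ℝ) ≤ Real.exp Real.pi * Real.exp (-b * ‖ξ‖^2) := by
          rw [← Real.exp_add]
          apply Real.one_le_exp
          linarith
        have h3 : ‖fourierMeasure μ ξ‖^2 ≤ Real.exp Real.pi * g ξ := by
          have h4 := mul_le_mul_of_nonneg_left h2 (sq_nonneg ‖fourierMeasure μ ξ‖)
          simp only [hg]
          nlinarith [h4]
        calc (‖fourierMeasure μ ξ‖₊ : ℝ≥0∞) ^ 2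
            = ENNReal.ofReal (‖fourierMeasure μ ξ‖^2) := by
              rw [ENNReal.ofReal_pow (norm_nonneg _), ofReal_norm, enorm_eq_nnnorm]
          _ ≤ ENNReal.ofReal (Real.exp Real.pi * g ξ) := ENNReal.ofReal_le_ofReal h3
          _ = ENNReal.ofReal (Real.exp Real.pi) * ENNReal.ofReal (g ξ) :=
              ENNReal.ofReal_mul (Real.exp_nonneg _)
    _ ≤ ∫⁻ ξ, ENNReal.ofReal (Real.exp Real.pi) * ENNReal.ofReal (g ξ) ∂volume :=
        setLIntegral_le_lintegral _ _
    _ = ENNReal.ofReal (Real.exp Real.pi) * ∫⁻ ξ, ENNReal.ofReal (g ξ) ∂volume :=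
        lintegral_const_mul' _ _ ENNReal.ofReal_ne_top
    _ = ENNReal.ofReal (Real.exp Real.pi) * ENNReal.ofReal (∫ ξ, g ξ) := by
        rw [ofReal_integral_eq_lintegral_ofReal hgint (ae_of_all _ hgnn)]
    _ = ENNReal.ofReal (Real.exp Real.pi) * ENNReal.ofReal
          (∫ z : EuclideanSpace ℝ (Fin d) × EuclideanSpace ℝ (Fin d),
            (R:ℝ)^d * Real.exp (-(Real.pi * R^2) * ‖z.1 - z.2‖^2) ∂(μ.prod μ)) := by
        rw [hg]
        rw [show (fun ξ : EuclideanSpace ℝ (Fin d) =>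
            ‖fourierMeasure μ ξ‖^2 * Real.exp (-b * ‖ξ‖^2)) = fun ξ =>
            ‖fourierMeasure μ ξ‖^2 * Real.exp (-(Real.pi / R^2) * ‖ξ‖^2) from rfl]
        rw [plancherel_gauss μ hR0]
    _ = ENNReal.ofReal (Real.exp Real.pi) *
          ∫⁻ z : EuclideanSpace ℝ (Fin d) × EuclideanSpace ℝ (Fin d),
            ENNReal.ofReal ((R:ℝ)^d * Real.exp (-(Real.pi * R^2) * ‖z.1 - z.2‖^2)) ∂(μ.prod μ) := by
        rw [ofReal_integral_eq_lintegral_ofReal hprodint hprodnn]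
    _ = ENNReal.ofReal (Real.exp Real.pi) *
          ∫⁻ x, (∫⁻ y, ENNReal.ofReal ((R:ℝ)^d
            * Real.exp (-(Real.pi * R^2) * ‖x - y‖^2)) ∂μ) ∂μ := by
        congr 1
        rw [lintegral_prod]
        exact (ENNReal.continuous_ofReal.comp
          (by fun_prop : Continuous fun z : EuclideanSpace ℝ (Fin d) × EuclideanSpace ℝ (Fin d) =>
            (R:ℝ)^d * Real.exp (-(Real.pi * R^2) * ‖z.1 - z.2‖^2))).measurable.aemeasurable
    _ ≤ ENNReal.ofReal (Real.exp Real.pi) *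
          ∫⁻ _, ENNReal.ofReal ((R:ℝ)^d) * ENNReal.ofReal (A * R ^ (-s)) ∂μ := by
        gcongr with x
        calc ∫⁻ y, ENNReal.ofReal ((R:ℝ)^d * Real.exp (-(Real.pi * R^2) * ‖x - y‖^2)) ∂μ
            = ENNReal.ofReal ((R:ℝ)^d)
              * ∫⁻ y, ENNReal.ofReal (Real.exp (-(Real.pi * R^2) * ‖x - y‖^2)) ∂μ := by
              rw [← lintegral_const_mul' _ _ ENNReal.ofReal_ne_top]
              congr 1 with y
              rw [← ENNReal.ofReal_mul (by positivity)]
          _ ≤ ENNReal.ofReal ((R:ℝ)^d) * ENNReal.ofReal (A * R ^ (-s)) := by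
              gcongr
              rw [hA]
              exact frostman_gauss μ hC hs₀ hball x hR0
    _ = ENNReal.ofReal (Real.exp Real.pi)
          * (ENNReal.ofReal ((R:ℝ)^d) * ENNReal.ofReal (A * R ^ (-s))) := by
        rw [lintegral_const, measure_univ, mul_one]
    _ ≤ ENNReal.ofReal (Real.exp Real.pi * A * R ^ ((d : ℝ) - s)) := by
        rw [← ENNReal.ofReal_mul (by positivity), ← ENNReal.ofReal_mul (Real.exp_nonneg _)]
        apply ENNReal.ofReal_le_ofReal
        apply le_of_eq
        have hRd : (R:ℝ)^d * R ^ (-s) = R ^ ((d : ℝ) - s) := by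
          rw [← Real.rpow_natCast R d, ← Real.rpow_add hR0, sub_eq_add_neg]
        rw [← hRd]
        ring
end
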